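/- arXiv:2109.07643 — 5 statements merged into one kernel-verified Lean document; each statement's English description precedes it below -/
import Mathlib

section
/- Let F be an n×n real matrix with all entries nonnegative, and let V be an n×n real matrix that is Metzler and Hurwitz. Write V = V_od - V_d, where V_d ≥ 0 is the diagonal matrix with the same diagonal as -V, and V_od ≥ 0 equals V with its diagonal set to zero. Then ρ(F V⁻¹) = inf { r ∈ ℝ : r > 0 and there exists a vector w ∈ ℝⁿ with all entries strictly positive such that (F + r V_od) w ≤ r V_d w entrywise } (the geometric-program characterization of the basic reproduction number). -/
open Matrix

/-- A square real matrix is *Metzler* if all its off-diagonal entries are nonnegative. -/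
def IsMetzler {n : ℕ} (A : Matrix (Fin n) (Fin n) ℝ) : Prop :=
  ∀ i j, i ≠ j → 0 ≤ A i j

/-- A square real matrix is *Hurwitz* if every complex eigenvalue has negative real part. -/
def IsHurwitz {n : ℕ} (A : Matrix (Fin n) (Fin n) ℝ) : Prop :=
  ∀ μ ∈ spectrum ℂ (A.map Complex.ofReal), μ.re < 0

/-- The spectral radius of a square real matrix: the maximum modulus of its complex
eigenvalues. -/
noncomputable def specRad {n : ℕ} (A : Matrix (Fin n) (Fin n) ℝ) : ℝ :=
  sSup {x : ℝ | ∃ μ ∈ spectrum ℂ (A.map Complex.ofReal), x = ‖μ‖}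

set_option maxHeartbeats 4000000

open Matrix Filter Topology
open scoped ENNReal NNReal
namespace GPaux
variable {n : ℕ}
attribute [local instance] Matrix.linftyOpNormedRing Matrix.linftyOpNormedAlgebra

lemma entry_nnnorm_le (A : Matrix (Fin n) (Fin n) ℂ) (i j : Fin n) : ‖A i j‖₊ ≤ ‖A‖₊ := by
  rw [Matrix.linfty_opNNNorm_def]
  calc ‖A i j‖₊ ≤ ∑ k, ‖A i k‖₊ :=
        Finset.single_le_sum (f := fun k => ‖A i k‖₊) (fun _ _ => zero_le) (Finset.mem_univ j)
    _ ≤ _ := Finset.le_sup (f := fun i => ∑ k, ‖A i k‖₊) (Finset.mem_univ i)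

lemma pow_entry_nonneg (A : Matrix (Fin n) (Fin n) ℝ) (hA : ∀ i j, 0 ≤ A i j) (N : ℕ) :
    ∀ i j, 0 ≤ (A ^ N) i j := by
  induction N with
  | zero => intro i j; rw [pow_zero]; by_cases h : i = j <;> simp [Matrix.one_apply, h]
  | succ N ih =>
    intro i j
    rw [pow_succ, Matrix.mul_apply]
    exact Finset.sum_nonneg fun k _ => mul_nonneg (ih i k) (hA k j)

lemma map_det_ofReal (M : Matrix (Fin n) (Fin n) ℝ) :
    (M.map Complex.ofReal).det = (M.det : ℂ) := by
  have := RingHom.map_det Complex.ofRealHom M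
  exact this.symm

lemma map_pow_ofReal (A : Matrix (Fin n) (Fin n) ℝ) (N : ℕ) :
    ((A ^ N).map Complex.ofReal) = (A.map Complex.ofReal) ^ N := by
  have := map_pow (Complex.ofRealHom.mapMatrix) A N
  exact this

lemma mem_spectrum_iff_eigen (A : Matrix (Fin n) (Fin n) ℂ) (μ : ℂ) :
    μ ∈ spectrum ℂ A ↔ ∃ x : Fin n → ℂ, x ≠ 0 ∧ A *ᵥ x = μ • x := by
  rw [← AlgEquiv.spectrum_eq (Matrix.toLinAlgEquiv'), ← Module.End.hasEigenvalue_iff_mem_spectrum]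
  constructor
  · intro h
    obtain ⟨x, hx1, hx2⟩ := h.exists_hasEigenvector
    refine ⟨x, hx2, ?_⟩
    have := Module.End.mem_eigenspace_iff.mp hx1
    simpa [Matrix.toLinAlgEquiv'_apply] using this
  · rintro ⟨x, hx0, hx⟩
    exact Module.End.hasEigenvalue_of_hasEigenvector ⟨Module.End.mem_eigenspace_iff.mpr
      (by simpa [Matrix.toLinAlgEquiv'_apply] using hx), hx0⟩

lemma spectralRadius_lt_one (a : Matrix (Fin n) (Fin n) ℂ)
    (h : ∀ μ ∈ spectrum ℂ a, ‖μ‖₊ < 1) : spectralRadius ℂ a < 1 := by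
  have hfin := Matrix.finite_spectrum a
  rcases Set.eq_empty_or_nonempty (spectrum ℂ a) with he | hne
  · rw [spectralRadius]
    simp [he]
  · obtain ⟨μ0, hμ0mem, hμ0⟩ := hfin.toFinset.exists_max_image (fun μ => ‖μ‖₊)
      (by simpa [Set.Finite.toFinset_nonempty] using hne)
    rw [Set.Finite.mem_toFinset] at hμ0mem
    calc spectralRadius ℂ a ≤ (‖μ0‖₊ : ℝ≥0∞) := by
          rw [spectralRadius]
          refine iSup₂_le fun μ hμ => ?_
          exact_mod_cast ENNReal.coe_le_coe.mpr (hμ0 μ (hfin.mem_toFinset.mpr hμ))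
      _ < 1 := by exact_mod_cast h μ0 hμ0mem

lemma tendsto_pow_zero (a : Matrix (Fin n) (Fin n) ℂ)
    (h : ∀ μ ∈ spectrum ℂ a, ‖μ‖₊ < 1) :
    Tendsto (fun N : ℕ => a ^ N) atTop (nhds 0) := by
  have hρ : spectralRadius ℂ a < 1 := spectralRadius_lt_one a h
  obtain ⟨q, hq1, hq2⟩ := exists_between hρ
  have hgel := spectrum.pow_nnnorm_pow_one_div_tendsto_nhds_spectralRadius a
  have hev : ∀ᶠ N : ℕ in atTop, (‖a ^ N‖₊ : ℝ≥0∞) ^ (1 / (N : ℝ)) < q :=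
    hgel.eventually_lt_const hq1
  have hbound : ∀ᶠ N : ℕ in atTop, (‖a ^ N‖₊ : ℝ≥0∞) ≤ q ^ N := by
    filter_upwards [hev, eventually_ge_atTop 1] with N hN hN1
    have hNpos : (0:ℝ) < N := by exact_mod_cast hN1
    have key : (‖a ^ N‖₊ : ℝ≥0∞) = ((‖a ^ N‖₊ : ℝ≥0∞) ^ (1 / (N:ℝ))) ^ (N:ℝ) := by
      rw [← ENNReal.rpow_mul, one_div, inv_mul_cancel₀ (ne_of_gt hNpos), ENNReal.rpow_one]
    calc (‖a ^ N‖₊ : ℝ≥0∞) = ((‖a ^ N‖₊ : ℝ≥0∞) ^ (1 / (N:ℝ))) ^ (N:ℝ) := key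
      _ ≤ q ^ (N:ℝ) := ENNReal.rpow_le_rpow hN.le hNpos.le
      _ = q ^ N := ENNReal.rpow_natCast q N
  have hq0 : Tendsto (fun N : ℕ => q ^ N) atTop (nhds (0:ℝ≥0∞)) :=
    ENNReal.tendsto_pow_atTop_nhds_zero_of_lt_one hq2
  have hnn : Tendsto (fun N : ℕ => (‖a ^ N‖₊ : ℝ≥0∞)) atTop (nhds 0) :=
    tendsto_of_tendsto_of_tendsto_of_le_of_le' tendsto_const_nhds hq0
      (Eventually.of_forall fun N => zero_le) hbound
  have hnorm : Tendsto (fun N : ℕ => ‖a ^ N‖) atTop (nhds 0) := by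
    have := (ENNReal.tendsto_toReal ENNReal.zero_ne_top).comp hnn
    simpa [Function.comp_def] using this
  exact tendsto_zero_iff_norm_tendsto_zero.mpr hnorm


lemma spectrum_smul_mem {A : Matrix (Fin n) (Fin n) ℂ} {c μ : ℂ} (hc : c ≠ 0)
    (h : μ ∈ spectrum ℂ (c • A)) : c⁻¹ * μ ∈ spectrum ℂ A := by
  obtain ⟨x, hx0, hx⟩ := (mem_spectrum_iff_eigen _ _).mp h
  refine (mem_spectrum_iff_eigen _ _).mpr ⟨x, hx0, ?_⟩
  have h1 : c • (A *ᵥ x) = μ • x := by rw [← Matrix.smul_mulVec]; exact hx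
  have h2 := congrArg (fun v => c⁻¹ • v) h1
  simpa [smul_smul, inv_mul_cancel₀ hc] using h2

lemma spectrum_smul_one_sub_mem {A : Matrix (Fin n) (Fin n) ℂ} {c μ : ℂ}
    (h : μ ∈ spectrum ℂ (c • (1 : Matrix (Fin n) (Fin n) ℂ) - A)) : c - μ ∈ spectrum ℂ A := by
  obtain ⟨x, hx0, hx⟩ := (mem_spectrum_iff_eigen _ _).mp h
  refine (mem_spectrum_iff_eigen _ _).mpr ⟨x, hx0, ?_⟩
  rw [Matrix.sub_mulVec, Matrix.smul_mulVec, Matrix.one_mulVec] at hx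
  have : A *ᵥ x = c • x - μ • x := by
    rw [← hx]; abel
  rw [this, sub_smul]

lemma spectrum_neg_mem {A : Matrix (Fin n) (Fin n) ℂ} {μ : ℂ}
    (h : μ ∈ spectrum ℂ (-A)) : -μ ∈ spectrum ℂ A := by
  obtain ⟨x, hx0, hx⟩ := (mem_spectrum_iff_eigen _ _).mp h
  refine (mem_spectrum_iff_eigen _ _).mpr ⟨x, hx0, ?_⟩
  rw [Matrix.neg_mulVec] at hx
  rw [neg_smul, ← hx, neg_neg]

lemma inv_entries_nonneg (M : Matrix (Fin n) (Fin n) ℝ)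
    (hod : ∀ i j, i ≠ j → M i j ≤ 0)
    (hsp : ∀ μ ∈ spectrum ℂ (M.map Complex.ofReal), 0 < μ.re) :
    IsUnit M.det ∧ ∀ i j, 0 ≤ M⁻¹ i j := by
  have hdet : IsUnit M.det := by
    have h0 : (0:ℂ) ∉ spectrum ℂ (M.map Complex.ofReal) := fun h => by
      simpa using (hsp 0 h)
    have hu : IsUnit (M.map Complex.ofReal) := by
      have h1 := spectrum.notMem_iff.mp h0
      rw [map_zero, zero_sub] at h1
      have := h1.neg; rwa [neg_neg] at this
    have hdc : IsUnit (M.map Complex.ofReal).det := (Matrix.isUnit_iff_isUnit_det _).mp hu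
    rw [map_det_ofReal] at hdc
    exact isUnit_iff_ne_zero.mpr (Complex.ofReal_ne_zero.mp hdc.ne_zero)
  have hfin := Matrix.finite_spectrum (M.map Complex.ofReal)
  obtain ⟨s, hs0, hsdiag, hsspec⟩ :
      ∃ s : ℝ, 0 < s ∧ (∀ i, M i i ≤ s) ∧
        ∀ μ ∈ spectrum ℂ (M.map Complex.ofReal), ‖μ‖ ^ 2 < 2 * s * μ.re := by
    have : Finite (spectrum ℂ (M.map Complex.ofReal)) := hfin
    obtain ⟨s1, hs1⟩ := Finite.exists_le (fun i : Fin n => M i i)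
    obtain ⟨s2, hs2⟩ := Finite.exists_le
      (fun μ : (spectrum ℂ (M.map Complex.ofReal)) =>
        ‖(μ : ℂ)‖ ^ 2 / (2 * (μ : ℂ).re))
    refine ⟨max s1 0 + max s2 0 + 1, by positivity, ?_, ?_⟩
    · intro i
      have h1 := hs1 i
      have h2 : s1 ≤ max s1 0 := le_max_left _ _
      have h3 : (0:ℝ) ≤ max s2 0 := le_max_right _ _
      linarith
    · intro μ hμ
      have hre := hsp μ hμ
      have h1 := hs2 ⟨μ, hμ⟩
      have h2 : s2 ≤ max s2 0 := le_max_left _ _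
      have h3 : (0:ℝ) ≤ max s1 0 := le_max_right _ _
      have hgs : ‖μ‖ ^ 2 / (2 * μ.re) < max s1 0 + max s2 0 + 1 := by linarith
      rw [div_lt_iff₀ (by linarith : (0:ℝ) < 2 * μ.re)] at hgs
      calc ‖μ‖ ^ 2 < (max s1 0 + max s2 0 + 1) * (2 * μ.re) := hgs
        _ = 2 * (max s1 0 + max s2 0 + 1) * μ.re := by ring
  set B : Matrix (Fin n) (Fin n) ℝ := s • (1:Matrix (Fin n) (Fin n) ℝ) - M with hB
  have hBnn : ∀ i j, 0 ≤ B i j := by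
    intro i j
    by_cases h : i = j
    · subst h
      have : B i i = s - M i i := by simp [hB, Matrix.one_apply]
      rw [this]; linarith [hsdiag i]
    · have : B i j = -M i j := by simp [hB, Matrix.one_apply, h]
      rw [this]; linarith [hod i j h]
  have hBc : B.map Complex.ofReal =
      (s:ℂ) • (1: Matrix (Fin n) (Fin n) ℂ) - M.map Complex.ofReal := by
    ext i j
    by_cases h : i = j <;>
      simp [hB, Matrix.map_apply, Matrix.one_apply, h]
  have hsC : ((s:ℂ)) ≠ 0 := by
    simpa [Complex.ofReal_ne_zero] using hs0.ne'
  have hxcspec : ∀ μ ∈ spectrum ℂ ((s⁻¹ • B).map Complex.ofReal), ‖μ‖₊ < 1 := by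
    have hmap : ((s⁻¹ • B).map Complex.ofReal) = ((s:ℂ))⁻¹ • (B.map Complex.ofReal) := by
      ext i j; simp [Matrix.map_apply]
    rw [hmap]
    intro μ hμ
    have hν := spectrum_smul_mem (inv_ne_zero hsC) hμ
    rw [inv_inv] at hν
    -- ν := s * μ ∈ spectrum of Bc
    rw [hBc] at hν
    have hμ0 := spectrum_smul_one_sub_mem hν
    have hre := hsp _ hμ0
    have habs := hsspec _ hμ0
    -- abs (s*μ) < s
    have hν2 : ‖(s:ℂ) * μ‖ ^ 2 < s ^ 2 := by
      have he : (s:ℂ) * μ = (s:ℂ) - ((s:ℂ) - (s:ℂ) * μ) := by ring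
      rw [he]
      have h1 : ‖(s:ℂ) - ((s:ℂ) - (s:ℂ)*μ)‖ ^ 2
          = (s - ((s:ℂ) - (s:ℂ)*μ).re) ^ 2 + (((s:ℂ) - (s:ℂ)*μ).im) ^ 2 := by
        rw [Complex.sq_norm, Complex.normSq_apply]
        simp [Complex.sub_re, Complex.sub_im]
        ring
      have h2 : ‖(s:ℂ) - (s:ℂ)*μ‖ ^ 2
          = (((s:ℂ) - (s:ℂ)*μ).re) ^ 2 + (((s:ℂ) - (s:ℂ)*μ).im) ^ 2 := by
        rw [Complex.sq_norm, Complex.normSq_apply]; ring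
      rw [h1]
      rw [h2] at habs
      nlinarith [habs]
    have hνlt : ‖(s:ℂ) * μ‖ < s := by
      nlinarith [norm_nonneg ((s:ℂ) * μ)]
    have : ‖μ‖ < 1 := by
      rw [norm_mul] at hνlt
      rw [Complex.norm_real, Real.norm_eq_abs, abs_of_pos hs0] at hνlt
      by_contra hc
      push_neg at hc
      nlinarith [norm_nonneg μ]
    have hnorm : ‖μ‖ < 1 := this
    exact_mod_cast hnorm
  have htend0 := tendsto_pow_zero _ hxcspec
  have hxN : ∀ i j, Tendsto (fun N => ((s⁻¹ • B) ^ N) i j) atTop (nhds 0) := by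
    intro i j
    have hn : Tendsto (fun N => ‖((s⁻¹ • B).map Complex.ofReal) ^ N‖) atTop (nhds 0) :=
      tendsto_zero_iff_norm_tendsto_zero.mp htend0
    refine squeeze_zero_norm (fun N => ?_) hn
    have h2 : ‖(((s⁻¹ • B) ^ N).map Complex.ofReal) i j‖ = ‖((s⁻¹ • B) ^ N) i j‖ := by
      simp [Matrix.map_apply, Complex.norm_real]
    calc ‖((s⁻¹ • B) ^ N) i j‖ = ‖(((s⁻¹ • B) ^ N).map Complex.ofReal) i j‖ := h2.symm
      _ ≤ ‖((s⁻¹ • B) ^ N).map Complex.ofReal‖ := by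
          exact_mod_cast entry_nnnorm_le (((s⁻¹ • B) ^ N).map Complex.ofReal) i j
      _ = ‖((s⁻¹ • B).map Complex.ofReal) ^ N‖ := by rw [map_pow_ofReal]
  set P : ℕ → Matrix (Fin n) (Fin n) ℝ :=
    fun N => ∑ k ∈ Finset.range N, (s⁻¹)^(k+1) • B ^ k with hP
  have hMP : ∀ N, M * P N = 1 - (s⁻¹)^N • B ^ N := by
    intro N
    induction N with
    | zero => simp [hP]
    | succ N ih =>
      have hPs : P (N+1) = P N + (s⁻¹)^(N+1) • B ^ N := by
        rw [hP]; exact Finset.sum_range_succ _ _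
      rw [hPs, Matrix.mul_add, ih, Matrix.mul_smul]
      have hM : M = s • (1:Matrix (Fin n) (Fin n) ℝ) - B := by rw [hB]; abel
      rw [hM, Matrix.sub_mul, Matrix.smul_mul, Matrix.one_mul]
      rw [smul_sub, smul_smul]
      have h1 : (s⁻¹)^(N+1) * s = (s⁻¹)^N := by
        rw [pow_succ, mul_assoc, inv_mul_cancel₀ hs0.ne', mul_one]
      have h2 : B * B ^ N = B ^ (N+1) := (pow_succ' B N).symm
      rw [h1, h2]
      abel
  have hPinv : ∀ N, P N = M⁻¹ - (s⁻¹)^N • (M⁻¹ * B ^ N) := by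
    intro N
    have h1 := congrArg (fun X => M⁻¹ * X) (hMP N)
    rw [← Matrix.mul_assoc, Matrix.nonsing_inv_mul M hdet, Matrix.one_mul, Matrix.mul_sub,
      Matrix.mul_one, Matrix.mul_smul] at h1
    exact h1
  refine ⟨hdet, fun i j => ?_⟩
  have hterm : Tendsto (fun N => ((s⁻¹)^N • (M⁻¹ * B ^ N)) i j) atTop (nhds 0) := by
    have heq : ∀ N, ((s⁻¹)^N • (M⁻¹ * B ^ N)) i j
        = ∑ k, M⁻¹ i k * (((s⁻¹ • B) ^ N) k j) := by
      intro N
      rw [smul_pow]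
      simp only [Matrix.smul_apply, Matrix.mul_apply, smul_eq_mul, Finset.mul_sum]
      exact Finset.sum_congr rfl fun k _ => by ring
    have h3 : Tendsto (fun N => ∑ k, M⁻¹ i k * (((s⁻¹ • B) ^ N) k j)) atTop (nhds 0) := by
      have h4 := tendsto_finset_sum (Finset.univ : Finset (Fin n))
        (fun k _ => ((hxN k j).const_mul (M⁻¹ i k)))
      simpa using h4
    exact h3.congr (fun N => (heq N).symm)
  have hPlim : Tendsto (fun N => P N i j) atTop (nhds (M⁻¹ i j)) := by
    have he : (fun N => P N i j) = fun N => M⁻¹ i j - ((s⁻¹)^N • (M⁻¹ * B ^ N)) i j := by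
      funext N; rw [hPinv N, Matrix.sub_apply]
    rw [he]
    simpa using (tendsto_const_nhds.sub hterm)
  refine ge_of_tendsto hPlim (Eventually.of_forall fun N => ?_)
  rw [hP]
  simp only
  rw [Matrix.sum_apply]
  refine Finset.sum_nonneg fun k _ => ?_
  rw [Matrix.smul_apply]
  exact mul_nonneg (pow_nonneg (inv_nonneg.mpr hs0.le) _) (pow_entry_nonneg B hBnn k i j)

lemma map_mul_ofReal (A B : Matrix (Fin n) (Fin n) ℝ) :
    (A * B).map Complex.ofReal = A.map Complex.ofReal * B.map Complex.ofReal := by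
  ext i j
  simp only [Matrix.map_apply, Matrix.mul_apply]
  push_cast
  rfl

lemma map_one_ofReal : (1 : Matrix (Fin n) (Fin n) ℝ).map Complex.ofReal = 1 := by
  ext i j
  by_cases h : i = j <;> simp [Matrix.map_apply, Matrix.one_apply, h]

lemma mulVec_entry_nonneg (A : Matrix (Fin n) (Fin n) ℝ) (v : Fin n → ℝ)
    (hA : ∀ i j, 0 ≤ A i j) (hv : ∀ i, 0 ≤ v i) (i : Fin n) : 0 ≤ (A *ᵥ v) i := by
  simp only [Matrix.mulVec, dotProduct]
  exact Finset.sum_nonneg fun j _ => mul_nonneg (hA i j) (hv j)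

end GPaux

open GPaux in
private theorem specRad_aux {n : ℕ} (F V : Matrix (Fin n) (Fin n) ℝ)
    (hF : ∀ i j, 0 ≤ F i j)
    (hVmetzler : ∀ i j, i ≠ j → 0 ≤ V i j)
    (hVhurwitz : ∀ μ ∈ spectrum ℂ (V.map Complex.ofReal), μ.re < 0)
    (Vd Vod : Matrix (Fin n) (Fin n) ℝ)
    (hVd : Vd = Matrix.diagonal (fun i => -(V i i)))
    (hVod : Vod = Matrix.of fun i j => if i = j then 0 else V i j)
    (hVdnonneg : ∀ i j, 0 ≤ Vd i j) (hVodnonneg : ∀ i j, 0 ≤ Vod i j) :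
    sSup {x : ℝ | ∃ μ ∈ spectrum ℂ ((F * V⁻¹).map Complex.ofReal), x = ‖μ‖} =
      sInf {r : ℝ | 0 < r ∧ ∃ w : Fin n → ℝ, (∀ i, 0 < w i) ∧
        ∀ i, ((F + r • Vod) *ᵥ w) i ≤ r * (Vd *ᵥ w) i} := by
  classical
  set ρ : ℝ := sSup {x : ℝ | ∃ μ ∈ spectrum ℂ ((F * V⁻¹).map Complex.ofReal),
    x = ‖μ‖} with hρdef
  set S : Set ℝ := {r : ℝ | 0 < r ∧ ∃ w : Fin n → ℝ, (∀ i, 0 < w i) ∧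
    ∀ i, ((F + r • Vod) *ᵥ w) i ≤ r * (Vd *ᵥ w) i} with hSdef
  -- V = Vod - Vd
  have hVsum : Vod - Vd = V := by
    ext i j
    by_cases h : i = j
    · subst h; simp [hVd, hVod, Matrix.diagonal_apply_eq]
    · simp [hVd, hVod, Matrix.diagonal_apply_ne _ h, h]
  -- condition rewriting
  have hcond : ∀ (r : ℝ) (w : Fin n → ℝ),
      (∀ i, ((F + r • Vod) *ᵥ w) i ≤ r * (Vd *ᵥ w) i) ↔
      (∀ i, (F *ᵥ w) i + r * ((V *ᵥ w) i) ≤ 0) := by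
    intro r w
    have key : ∀ i, ((F + r • Vod) *ᵥ w) i - r * (Vd *ᵥ w) i
        = (F *ᵥ w) i + r * ((V *ᵥ w) i) := by
      intro i
      have hV' : V *ᵥ w = Vod *ᵥ w - Vd *ᵥ w := by rw [← Matrix.sub_mulVec, hVsum]
      rw [Matrix.add_mulVec, Matrix.smul_mulVec]
      simp only [Pi.add_apply, Pi.smul_apply, smul_eq_mul, hV', Pi.sub_apply]
      ring
    constructor <;> intro h i <;> have h1 := key i <;> have h2 := h i <;> linarith
  -- Hurwitz facts
  have hnegVspec : ∀ μ ∈ spectrum ℂ ((-V).map Complex.ofReal), 0 < μ.re := by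
    intro μ hμ
    have hmap : (-V).map Complex.ofReal = -(V.map Complex.ofReal) := by
      ext i j; simp [Matrix.map_apply]
    rw [hmap] at hμ
    have h2 := hVhurwitz _ (spectrum_neg_mem hμ)
    simp only [Complex.neg_re] at h2
    linarith
  obtain ⟨hnegVdet, hNV⟩ := inv_entries_nonneg (-V)
    (fun i j hij => by simpa using hVmetzler i j hij) hnegVspec
  have hVdet : IsUnit V.det := by
    rw [isUnit_iff_ne_zero]
    intro h0
    rw [isUnit_iff_ne_zero, Matrix.det_neg, h0, mul_zero] at hnegVdet
    exact hnegVdet rfl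
  have hA'eq : F * (-V)⁻¹ = -(F * V⁻¹) := by
    have h1 : (-V)⁻¹ = -(V⁻¹) := by
      apply Matrix.inv_eq_left_inv
      rw [Matrix.neg_mul, Matrix.mul_neg, neg_neg, Matrix.nonsing_inv_mul V hVdet]
    rw [h1, Matrix.mul_neg]
  -- nonnegativity of ρ
  have hρ0 : 0 ≤ ρ := by
    rw [hρdef]
    apply Real.sSup_nonneg
    rintro x ⟨μ, hμ, rfl⟩
    exact norm_nonneg _
  -- bound by ρ
  have hbd : ∀ μ ∈ spectrum ℂ ((F * V⁻¹).map Complex.ofReal), ‖μ‖ ≤ ρ := by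
    intro μ hμ
    rw [hρdef]
    apply le_csSup
    · have hfin := Matrix.finite_spectrum ((F * V⁻¹).map Complex.ofReal)
      have him : {x : ℝ | ∃ μ ∈ spectrum ℂ ((F * V⁻¹).map Complex.ofReal),
          x = ‖μ‖} = (fun μ => ‖μ‖) '' spectrum ℂ ((F * V⁻¹).map Complex.ofReal) := by
        ext x
        simp [Set.mem_image, eq_comm]
      rw [him]
      exact (hfin.image _).bddAbove
    · exact ⟨μ, hμ, rfl⟩
  -- direction (ii)
  have hmem : ∀ r : ℝ, ρ < r → r ∈ S := by
    intro r hr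
    have hr0 : 0 < r := lt_of_le_of_lt hρ0 hr
    set A' : Matrix (Fin n) (Fin n) ℝ := F * (-V)⁻¹ with hA'
    have hA'nn : ∀ i j, 0 ≤ A' i j := fun i j => by
      rw [hA', Matrix.mul_apply]
      exact Finset.sum_nonneg fun k _ => mul_nonneg (hF i k) (hNV k j)
    have hA'spec : ∀ ν ∈ spectrum ℂ (A'.map Complex.ofReal), ‖ν‖ ≤ ρ := by
      intro ν hν
      have hmapA : A'.map Complex.ofReal = -((F * V⁻¹).map Complex.ofReal) := by
        rw [hA'eq]; ext i j; simp [Matrix.map_apply]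
      rw [hmapA] at hν
      have hb := hbd _ (spectrum_neg_mem hν)
      simpa using hb
    set M' : Matrix (Fin n) (Fin n) ℝ := r • (1 : Matrix (Fin n) (Fin n) ℝ) - A' with hM'
    have hM'od : ∀ i j, i ≠ j → M' i j ≤ 0 := by
      intro i j hij
      have : M' i j = -A' i j := by simp [hM', Matrix.one_apply, hij]
      rw [this]
      linarith [hA'nn i j]
    have hM'spec : ∀ μ ∈ spectrum ℂ (M'.map Complex.ofReal), 0 < μ.re := by
      intro μ hμ
      have hmapM : M'.map Complex.ofReal
          = (r:ℂ) • (1 : Matrix (Fin n) (Fin n) ℂ) - A'.map Complex.ofReal := by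
        ext i j; by_cases h : i = j <;> simp [hM', Matrix.map_apply, Matrix.one_apply, h]
      rw [hmapM] at hμ
      have habs := hA'spec _ (spectrum_smul_one_sub_mem hμ)
      have hre : ((r:ℂ) - μ).re ≤ ‖(r:ℂ) - μ‖ := Complex.re_le_norm _
      have he : ((r:ℂ) - μ).re = r - μ.re := by simp [Complex.sub_re]
      rw [he] at hre
      linarith
    obtain ⟨hM'det, hM'inv⟩ := inv_entries_nonneg M' hM'od hM'spec
    set Mm : Matrix (Fin n) (Fin n) ℝ := M' * (-V) with hMm
    have hMdet : IsUnit Mm.det := by rw [hMm, Matrix.det_mul]; exact hM'det.mul hnegVdet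
    have hMminv : ∀ i j, 0 ≤ Mm⁻¹ i j := by
      rw [hMm, Matrix.mul_inv_rev]
      intro i j
      rw [Matrix.mul_apply]
      exact Finset.sum_nonneg fun k _ => mul_nonneg (hNV i k) (hM'inv k j)
    have hMmeq : Mm = r • (-V) - F := by
      rw [hMm, hM', Matrix.sub_mul, Matrix.smul_mul, Matrix.one_mul, hA',
        Matrix.mul_assoc, Matrix.nonsing_inv_mul _ hnegVdet, Matrix.mul_one]
    set w : Fin n → ℝ := Mm⁻¹ *ᵥ (fun _ => 1) with hwdef
    have hMw : Mm *ᵥ w = fun _ => 1 := by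
      rw [hwdef, Matrix.mulVec_mulVec, Matrix.mul_nonsing_inv _ hMdet, Matrix.one_mulVec]
    have hwnn : ∀ i, 0 ≤ w i := fun i =>
      mulVec_entry_nonneg _ _ hMminv (fun _ => zero_le_one) i
    have hwpos : ∀ i, 0 < w i := by
      intro i
      rcases eq_or_lt_of_le (hwnn i) with h0 | h; swap
      · exact h
      exfalso
      have hsum : ∑ k, Mm⁻¹ i k * 1 = 0 := by
        rw [hwdef] at h0
        simp only [Matrix.mulVec, dotProduct] at h0
        exact h0.symm
      have hall : ∀ k ∈ Finset.univ, Mm⁻¹ i k * 1 = 0 :=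
        (Finset.sum_eq_zero_iff_of_nonneg
          (fun k _ => by simpa using hMminv i k)).mp hsum
      have h1 : (Mm⁻¹ * Mm) i i = 0 := by
        rw [Matrix.mul_apply]
        apply Finset.sum_eq_zero
        intro k _
        have := hall k (Finset.mem_univ k)
        rw [mul_one] at this
        rw [this, zero_mul]
      rw [Matrix.nonsing_inv_mul _ hMdet, Matrix.one_apply_eq] at h1
      exact one_ne_zero h1
    refine ⟨hr0, w, hwpos, (hcond r w).mpr ?_⟩
    intro i
    have h1 := congrFun hMw i
    rw [hMmeq, Matrix.sub_mulVec, Matrix.smul_mulVec, Matrix.neg_mulVec] at h1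
    simp only [Pi.sub_apply, Pi.smul_apply, Pi.neg_apply, smul_eq_mul] at h1
    linarith
  -- direction (i)
  have hub : ∀ r ∈ S, ρ ≤ r := by
    rintro r ⟨hr0, w, hwpos, hwcond⟩
    have hrow := (hcond r w).mp hwcond
    rw [hρdef]
    apply Real.sSup_le _ hr0.le
    rintro x ⟨μ, hμ, rfl⟩
    by_contra hgt
    push_neg at hgt
    set m : ℝ := ‖μ‖ with hm
    have hVcdet : IsUnit ((V.map Complex.ofReal).det) := by
      rw [map_det_ofReal]
      exact isUnit_iff_ne_zero.mpr (Complex.ofReal_ne_zero.mpr hVdet.ne_zero)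
    have hinvmap : (V⁻¹).map Complex.ofReal = (V.map Complex.ofReal)⁻¹ := by
      refine (Matrix.inv_eq_left_inv ?_).symm
      rw [← map_mul_ofReal, Matrix.nonsing_inv_mul V hVdet, map_one_ofReal]
    obtain ⟨x, hx0, hxe⟩ := (mem_spectrum_iff_eigen _ _).mp hμ
    set y : Fin n → ℂ := (V.map Complex.ofReal)⁻¹ *ᵥ x with hy
    have hVy : (V.map Complex.ofReal) *ᵥ y = x := by
      rw [hy, Matrix.mulVec_mulVec, Matrix.mul_nonsing_inv _ hVcdet, Matrix.one_mulVec]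
    have hy0 : y ≠ 0 := by
      intro h
      apply hx0
      rw [← hVy, h, Matrix.mulVec_zero]
    have hyeig : (F.map Complex.ofReal) *ᵥ y = μ • ((V.map Complex.ofReal) *ᵥ y) := by
      rw [hVy]
      have hsplit : (F * V⁻¹).map Complex.ofReal
          = (F.map Complex.ofReal) * (V.map Complex.ofReal)⁻¹ := by
        rw [map_mul_ofReal, hinvmap]
      rw [hsplit] at hxe
      rw [hy, Matrix.mulVec_mulVec]
      exact hxe
    obtain ⟨i0, hi0⟩ := Function.ne_iff.mp hy0
    set u : Fin n → ℝ := (-V)⁻¹ *ᵥ (fun _ => 1) with hu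
    have hVu : (-V) *ᵥ u = fun _ => 1 := by
      rw [hu, Matrix.mulVec_mulVec, Matrix.mul_nonsing_inv _ hnegVdet, Matrix.one_mulVec]
    have hVu' : ∀ i, (V *ᵥ u) i = -1 := by
      intro i
      have h1 := congrFun hVu i
      rw [Matrix.neg_mulVec] at h1
      simp only [Pi.neg_apply] at h1
      linarith
    have hunn : ∀ i, 0 ≤ u i := fun i =>
      mulVec_entry_nonneg _ _ hNV (fun _ => zero_le_one) i
    have hm0 : 0 < m := hr0.trans hgt
    have hFwnn : ∀ i, 0 ≤ (F *ᵥ w) i := fun i =>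
      mulVec_entry_nonneg _ _ hF (fun j => (hwpos j).le) i
    have hVwnp : ∀ i, (V *ᵥ w) i ≤ 0 := by
      intro i
      nlinarith [hrow i, hFwnn i]
    have hFrow : ∀ i, (V *ᵥ w) i = 0 → ∀ j, F i j = 0 := by
      intro i hzero j
      have h1 : (F *ᵥ w) i = 0 := by
        have h2 := hrow i
        rw [hzero, mul_zero, add_zero] at h2
        exact le_antisymm h2 (hFwnn i)
      simp only [Matrix.mulVec, dotProduct] at h1
      have hall := (Finset.sum_eq_zero_iff_of_nonneg
        (fun k (_ : k ∈ Finset.univ) => mul_nonneg (hF i k) (hwpos k).le)).mp h1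
      have h3 := hall j (Finset.mem_univ j)
      exact (mul_eq_zero.mp h3).resolve_right (hwpos j).ne'
    have hεex : ∀ i, ∃ ε0 : ℝ, 0 < ε0 ∧ ∀ ε : ℝ, 0 < ε → ε ≤ ε0 →
        ((F *ᵥ w) i + ε * ((F *ᵥ u) i)) + m * ((V *ᵥ w) i + ε * ((V *ᵥ u) i)) < 0 := by
      intro i
      by_cases hz : (V *ᵥ w) i = 0
      · refine ⟨1, one_pos, fun ε hε _ => ?_⟩
        have hFw0 : (F *ᵥ w) i = 0 := by
          simp only [Matrix.mulVec, dotProduct]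
          exact Finset.sum_eq_zero fun k _ => by rw [hFrow i hz k, zero_mul]
        have hFu0 : (F *ᵥ u) i = 0 := by
          simp only [Matrix.mulVec, dotProduct]
          exact Finset.sum_eq_zero fun k _ => by rw [hFrow i hz k, zero_mul]
        rw [hz, hFw0, hFu0, hVu' i]
        nlinarith
      · have hzlt : (V *ᵥ w) i < 0 := lt_of_le_of_ne (hVwnp i) hz
        set K : ℝ := (F *ᵥ u) i + m * ((V *ᵥ u) i) with hK
        set d : ℝ := (m - r) * (-((V *ᵥ w) i)) with hd
        have hd0 : 0 < d := mul_pos (by linarith) (by linarith)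
        have hmaxpos : 0 < max K 1 := lt_of_lt_of_le one_pos (le_max_right _ _)
        refine ⟨d / (2 * max K 1), by positivity, fun ε hε hεle => ?_⟩
        have h1 : ε * K ≤ ε * max K 1 := mul_le_mul_of_nonneg_left (le_max_left _ _) hε.le
        have h2 : ε * max K 1 ≤ d / 2 := by
          calc ε * max K 1 ≤ (d / (2 * max K 1)) * max K 1 :=
                mul_le_mul_of_nonneg_right hεle hmaxpos.le
            _ = d / 2 := by field_simp
        have h3 := hrow i
        have hexp : ((F *ᵥ w) i + ε * ((F *ᵥ u) i)) + m * ((V *ᵥ w) i + ε * ((V *ᵥ u) i))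
            = ((F *ᵥ w) i + r * ((V *ᵥ w) i)) + (m - r) * ((V *ᵥ w) i) + ε * K := by
          rw [hK]; ring
        have hd' : (m - r) * ((V *ᵥ w) i) = -d := by rw [hd]; ring
        rw [hexp]
        linarith
    choose ε0 hε0pos hε0 using hεex
    have hne : (Finset.univ : Finset (Fin n)).Nonempty := ⟨i0, Finset.mem_univ _⟩
    set ε : ℝ := Finset.univ.inf' hne ε0 with hεdef
    have hεpos : 0 < ε := by
      rw [hεdef, Finset.lt_inf'_iff]
      exact fun i _ => hε0pos i
    set w' : Fin n → ℝ := w + ε • u with hw'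
    have hw'apply : ∀ i, w' i = w i + ε * u i := fun i => rfl
    have hw'pos : ∀ i, 0 < w' i := by
      intro i
      have h1 := hwpos i
      have h2 := mul_nonneg hεpos.le (hunn i)
      rw [hw'apply]
      linarith
    have hPi : ∀ i, (F *ᵥ w') i + m * ((V *ᵥ w') i) < 0 := by
      intro i
      have hsplitF : (F *ᵥ w') i = (F *ᵥ w) i + ε * ((F *ᵥ u) i) := by
        rw [hw', Matrix.mulVec_add, Matrix.mulVec_smul]
        simp
      have hsplitV : (V *ᵥ w') i = (V *ᵥ w) i + ε * ((V *ᵥ u) i) := by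
        rw [hw', Matrix.mulVec_add, Matrix.mulVec_smul]
        simp
      rw [hsplitF, hsplitV]
      exact hε0 i ε hεpos (Finset.inf'_le _ (Finset.mem_univ i))
    obtain ⟨i, _, himax⟩ := Finset.exists_max_image Finset.univ
      (fun j => ‖y j‖ / w' j) hne
    set c : ℝ := ‖y i‖ / w' i with hc
    have hcb : ∀ j, ‖y j‖ ≤ c * w' j := by
      intro j
      have h1 := himax j (Finset.mem_univ j)
      exact (div_le_iff₀ (hw'pos j)).mp h1
    have hyi : ‖y i‖ = c * w' i := by
      rw [hc]
      exact (div_mul_cancel₀ _ (hw'pos i).ne').symm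
    have hc0 : 0 < c := by
      have h1 : 0 < ‖y i0‖ := norm_pos_iff.mpr hi0
      have h3 : 0 < ‖y i0‖ / w' i0 := div_pos h1 (hw'pos i0)
      have h2 := himax i0 (Finset.mem_univ i0)
      exact lt_of_lt_of_le h3 h2
    have heq := congrFun hyeig i
    simp only [Matrix.mulVec, dotProduct, Pi.smul_apply, smul_eq_mul] at heq
    have e1 : ∑ j, (F.map Complex.ofReal) i j * y j
        = (F.map Complex.ofReal) i i * y i
          + ∑ j ∈ Finset.univ.erase i, (F.map Complex.ofReal) i j * y j :=
      (Finset.add_sum_erase _ _ (Finset.mem_univ i)).symm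
    have e2 : ∑ j, (V.map Complex.ofReal) i j * y j
        = (V.map Complex.ofReal) i i * y i
          + ∑ j ∈ Finset.univ.erase i, (V.map Complex.ofReal) i j * y j :=
      (Finset.add_sum_erase _ _ (Finset.mem_univ i)).symm
    rw [e1, e2] at heq
    have e3 : (F.map Complex.ofReal) i i * y i - μ * ((V.map Complex.ofReal) i i * y i)
        = ∑ j ∈ Finset.univ.erase i,
            (μ * ((V.map Complex.ofReal) i j * y j) - (F.map Complex.ofReal) i j * y j) := by
      rw [Finset.sum_sub_distrib, ← Finset.mul_sum]
      linear_combination heq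
    have hlow : (m * (-(V i i)) - F i i) * (c * w' i)
        ≤ ‖(F.map Complex.ofReal) i i * y i
            - μ * ((V.map Complex.ofReal) i i * y i)‖ := by
      have hb1 := norm_sub_norm_le (μ * ((V.map Complex.ofReal) i i * y i))
        ((F.map Complex.ofReal) i i * y i)
      rw [norm_sub_rev] at hb1
      have habsμV : ‖μ * ((V.map Complex.ofReal) i i * y i)‖
          = m * (|V i i| * (c * w' i)) := by
        rw [norm_mul, norm_mul]
        rw [show (V.map Complex.ofReal) i i = ((V i i : ℝ) : ℂ) from rfl]
        rw [Complex.norm_real, Real.norm_eq_abs, hyi, hm]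
      have habsF : ‖(F.map Complex.ofReal) i i * y i‖ = F i i * (c * w' i) := by
        rw [norm_mul]
        rw [show (F.map Complex.ofReal) i i = ((F i i : ℝ) : ℂ) from rfl]
        rw [Complex.norm_real, Real.norm_eq_abs, hyi, abs_of_nonneg (hF i i)]
      have hVabs : -(V i i) ≤ |V i i| := neg_le_abs _
      have hcw : 0 ≤ c * w' i := mul_nonneg hc0.le (hw'pos i).le
      nlinarith [hb1,
        mul_le_mul_of_nonneg_right (mul_le_mul_of_nonneg_left hVabs hm0.le) hcw]
    have hup : ‖∑ j ∈ Finset.univ.erase i,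
          (μ * ((V.map Complex.ofReal) i j * y j) - (F.map Complex.ofReal) i j * y j)‖
        ≤ c * ∑ j ∈ Finset.univ.erase i, (m * V i j + F i j) * w' j := by
      calc ‖∑ j ∈ Finset.univ.erase i,
              (μ * ((V.map Complex.ofReal) i j * y j) - (F.map Complex.ofReal) i j * y j)‖
          ≤ ∑ j ∈ Finset.univ.erase i,
              ‖μ * ((V.map Complex.ofReal) i j * y j)
                - (F.map Complex.ofReal) i j * y j‖ :=
            norm_sum_le _ _
        _ ≤ ∑ j ∈ Finset.univ.erase i, (m * V i j + F i j) * (c * w' j) := by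
            refine Finset.sum_le_sum fun j hj => ?_
            have hji : j ≠ i := Finset.ne_of_mem_erase hj
            have hVij : 0 ≤ V i j := hVmetzler i j (Ne.symm hji)
            have ht1 : ‖μ * ((V.map Complex.ofReal) i j * y j)
                - (F.map Complex.ofReal) i j * y j‖
                ≤ ‖μ * ((V.map Complex.ofReal) i j * y j)‖
                  + ‖(F.map Complex.ofReal) i j * y j‖ :=
              norm_sub_le _ _
            have ht2 : ‖μ * ((V.map Complex.ofReal) i j * y j)‖
                = m * (V i j * ‖y j‖) := by
              rw [norm_mul, norm_mul]
              rw [show (V.map Complex.ofReal) i j = ((V i j : ℝ) : ℂ) from rfl]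
              rw [Complex.norm_real, Real.norm_eq_abs, abs_of_nonneg hVij, hm]
            have ht3 : ‖(F.map Complex.ofReal) i j * y j‖
                = F i j * ‖y j‖ := by
              rw [norm_mul]
              rw [show (F.map Complex.ofReal) i j = ((F i j : ℝ) : ℂ) from rfl]
              rw [Complex.norm_real, Real.norm_eq_abs, abs_of_nonneg (hF i j)]
            have ht4 := hcb j
            have habsynn : 0 ≤ ‖y j‖ := norm_nonneg _
            nlinarith [mul_nonneg hm0.le hVij, hF i j]
        _ = c * ∑ j ∈ Finset.univ.erase i, (m * V i j + F i j) * w' j := by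
            rw [Finset.mul_sum]
            exact Finset.sum_congr rfl fun j _ => by ring
    have hsum_lt : ∑ j ∈ Finset.univ.erase i, (m * V i j + F i j) * w' j
        < -((m * V i i + F i i) * w' i) := by
      have hfull : ∑ j, (m * V i j + F i j) * w' j = m * ((V *ᵥ w') i) + (F *ᵥ w') i := by
        simp only [Matrix.mulVec, dotProduct, Finset.mul_sum]
        rw [← Finset.sum_add_distrib]
        exact Finset.sum_congr rfl fun j _ => by ring
      have hsplit := Finset.add_sum_erase Finset.univ
        (fun j => (m * V i j + F i j) * w' j) (Finset.mem_univ i)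
      have hpi := hPi i
      linarith [hsplit, hfull, hpi]
    have hfinal : (m * (-(V i i)) - F i i) * (c * w' i)
        < (m * (-(V i i)) - F i i) * (c * w' i) := by
      calc (m * (-(V i i)) - F i i) * (c * w' i)
          ≤ ‖(F.map Complex.ofReal) i i * y i
              - μ * ((V.map Complex.ofReal) i i * y i)‖ := hlow
        _ = ‖∑ j ∈ Finset.univ.erase i,
              (μ * ((V.map Complex.ofReal) i j * y j) - (F.map Complex.ofReal) i j * y j)‖ := by
            rw [e3]
        _ ≤ c * ∑ j ∈ Finset.univ.erase i, (m * V i j + F i j) * w' j := hup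
        _ < c * (-((m * V i i + F i i) * w' i)) := mul_lt_mul_of_pos_left hsum_lt hc0
        _ = (m * (-(V i i)) - F i i) * (c * w' i) := by ring
    exact lt_irrefl _ hfinal
  have hSne : S.Nonempty := ⟨ρ + 1, hmem _ (by linarith)⟩
  have hbdd : BddBelow S := ⟨0, fun r hr => hr.1.le⟩
  refine le_antisymm (le_csInf hSne hub) ?_
  have h2 : ∀ ε > 0, sInf S ≤ ρ + ε := fun ε hε => csInf_le hbdd (hmem _ (by linarith))
  exact le_of_forall_pos_le_add h2

/-- Geometric-program characterization of the basic reproduction number. Writing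
`V = V_od - V_d` with `V_d` the diagonal matrix with diagonal `-diag(V)` and `V_od`
equal to `V` with its diagonal set to zero,
`ρ(F V⁻¹) = inf { r > 0 : ∃ w > 0 with (F + r V_od) w ≤ r V_d w entrywise }`. -/
theorem specRad_eq_sInf_geometric_program {n : ℕ} (F V : Matrix (Fin n) (Fin n) ℝ)
    (hF : ∀ i j, 0 ≤ F i j) (hVmetzler : IsMetzler V) (hVhurwitz : IsHurwitz V)
    (Vd Vod : Matrix (Fin n) (Fin n) ℝ)
    (hVd : Vd = Matrix.diagonal (fun i => -(V i i)))
    (hVod : Vod = Matrix.of fun i j => if i = j then 0 else V i j)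
    (hVdnonneg : ∀ i j, 0 ≤ Vd i j) (hVodnonneg : ∀ i j, 0 ≤ Vod i j) :
    specRad (F * V⁻¹) =
      sInf {r : ℝ | 0 < r ∧ ∃ w : Fin n → ℝ, (∀ i, 0 < w i) ∧
        ∀ i, ((F + r • Vod) *ᵥ w) i ≤ r * (Vd *ᵥ w) i} := by
  exact specRad_aux F V hF hVmetzler hVhurwitz Vd Vod hVd hVod hVdnonneg hVodnonneg
end

section
/- (Relaxing Lemma) Let V be an n×n real Metzler and Hurwitz matrix, and let F be an n×n real nonnegative matrix with F ≠ 0. Define R₀ = inf { r > 0 : there exists w ∈ ℝⁿ with w > 0 and Vw < 0 such that (F + rV) w < 0 } and R̂₀ = inf { r > 0 : there exists w ∈ ℝⁿ with w > 0 and Vw ≤ 0 such that (F + rV) w ≤ 0 }. Then R₀ = R̂₀. -/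
open Matrix

open Filter
open scoped NNReal ENNReal

attribute [local instance] Matrix.linftyOpNormedRing Matrix.linftyOpNormedAlgebra
  Matrix.linftyOpNormedSpace

lemma entry_nnnorm_le {n : ℕ} (M : Matrix (Fin n) (Fin n) ℝ) (i j : Fin n) :
    ‖M i j‖₊ ≤ ‖M‖₊ := by
  rw [Matrix.linfty_opNNNorm_def]
  exact le_trans
    (Finset.single_le_sum (f := fun j => ‖M i j‖₊) (fun _ _ => zero_le) (Finset.mem_univ j))
    (Finset.le_sup (f := fun i => ∑ j, ‖M i j‖₊) (Finset.mem_univ i))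

lemma nnnorm_map_ofReal {n : ℕ} (M : Matrix (Fin n) (Fin n) ℝ) :
    ‖M.map Complex.ofReal‖₊ = ‖M‖₊ := by
  rw [Matrix.linfty_opNNNorm_def, Matrix.linfty_opNNNorm_def]
  refine Finset.sup_congr rfl fun i _ => ?_
  refine Finset.sum_congr rfl fun j _ => ?_
  simp [Matrix.map_apply]

lemma map_ofReal_pow {n : ℕ} (M : Matrix (Fin n) (Fin n) ℝ) (k : ℕ) :
    (M ^ k).map Complex.ofReal = (M.map Complex.ofReal) ^ k := by
  have h : ∀ N : Matrix (Fin n) (Fin n) ℝ, N.map Complex.ofReal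
      = Complex.ofRealHom.mapMatrix N := fun N => rfl
  rw [h, h, map_pow]

lemma mul_entry_nonneg {n : ℕ} {P Q : Matrix (Fin n) (Fin n) ℝ}
    (hP : ∀ i j, 0 ≤ P i j) (hQ : ∀ i j, 0 ≤ Q i j) : ∀ i j, 0 ≤ (P * Q) i j := by
  intro i j
  rw [Matrix.mul_apply]
  exact Finset.sum_nonneg fun l _ => mul_nonneg (hP i l) (hQ l j)

lemma pow_entry_nonneg {n : ℕ} {P : Matrix (Fin n) (Fin n) ℝ}
    (hP : ∀ i j, 0 ≤ P i j) (k : ℕ) : ∀ i j, 0 ≤ (P ^ k) i j := by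
  induction k with
  | zero => intro i j; rw [pow_zero]; by_cases h : i = j <;> simp [Matrix.one_apply, h]
  | succ m ih => rw [pow_succ]; exact mul_entry_nonneg ih hP

lemma exists_pos_of_metzler_hurwitz {n : ℕ} (V : Matrix (Fin n) (Fin n) ℝ)
    (hM : IsMetzler V) (hH : IsHurwitz V) :
    ∃ u : Fin n → ℝ, (∀ i, 0 < u i) ∧ ∀ i, (V *ᵥ u) i < 0 := by
  rcases Nat.eq_zero_or_pos n with hn | hn
  · subst hn; exact ⟨fun _ => 1, fun i => i.elim0, fun i => i.elim0⟩
  haveI : Nonempty (Fin n) := ⟨⟨0, hn⟩⟩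
  set Vc := V.map Complex.ofReal with hVc
  have hne : (spectrum ℂ Vc).Nonempty := spectrum.nonempty Vc
  have hcpt : IsCompact (spectrum ℂ Vc) := spectrum.isCompact Vc
  obtain ⟨μ₀, hμ₀, hμ₀max⟩ := hcpt.exists_isMaxOn hne Complex.continuous_re.continuousOn
  obtain ⟨μ₁, hμ₁, hμ₁max⟩ := hcpt.exists_isMaxOn hne continuous_norm.continuousOn
  set δ : ℝ := -μ₀.re with hδdef
  have hδ : 0 < δ := neg_pos.2 (hH μ₀ hμ₀)
  set R : ℝ := ‖μ₁‖ with hRdef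
  have hR0 : 0 ≤ R := norm_nonneg _
  set s : ℝ := 1 + (∑ i, |V i i|) + R ^ 2 / (2 * δ) with hsdef
  have hsum0 : 0 ≤ ∑ i, |V i i| := Finset.sum_nonneg fun _ _ => abs_nonneg _
  have hs1 : 1 ≤ s := by
    have : 0 ≤ R ^ 2 / (2 * δ) := by positivity
    simp only [hsdef]; linarith
  have hs0 : (0:ℝ) < s := lt_of_lt_of_le one_pos hs1
  set B := V + s • (1 : Matrix (Fin n) (Fin n) ℝ) with hBdef
  have hB : ∀ i j, 0 ≤ B i j := by
    intro i j
    by_cases h : i = j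
    · subst h
      have h1 : |V i i| ≤ ∑ j, |V j j| :=
        Finset.single_le_sum (f := fun j => |V j j|) (fun _ _ => abs_nonneg _) (Finset.mem_univ i)
      have h2 : -V i i ≤ |V i i| := neg_le_abs _
      have h3 : 0 ≤ R ^ 2 / (2 * δ) := by positivity
      simp only [hBdef, Matrix.add_apply, Matrix.smul_apply, Matrix.one_apply_eq, smul_eq_mul,
        mul_one, hsdef]
      linarith
    · simp only [hBdef, Matrix.add_apply, Matrix.smul_apply, Matrix.one_apply_ne h, smul_eq_mul,
        mul_zero, add_zero]
      exact hM i j h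
  -- spectrum bound for B
  have hBc : B.map Complex.ofReal = Vc + algebraMap ℂ _ (s : ℂ) := by
    rw [Algebra.algebraMap_eq_smul_one]
    ext i j
    by_cases h : i = j <;>
      simp [hBdef, hVc, Matrix.map_apply, Matrix.add_apply, Matrix.smul_apply, Matrix.one_apply, h]
  have hspec : ∀ ν ∈ spectrum ℂ (B.map Complex.ofReal), ‖ν‖ < s := by
    intro ν hν
    have hmem : ν - (s:ℂ) ∈ spectrum ℂ Vc := by
      have h1 : (ν - (s:ℂ)) + (s:ℂ) ∈ spectrum ℂ (B.map Complex.ofReal) := by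
        simpa using hν
      rw [spectrum.add_mem_iff] at h1
      have h2 : -algebraMap ℂ (Matrix (Fin n) (Fin n) ℂ) (s:ℂ) + B.map Complex.ofReal = Vc := by
        rw [hBc, add_comm Vc, neg_add_cancel_left]
      rwa [h2] at h1
    set μ : ℂ := ν - (s:ℂ) with hμdef
    have hν_eq : ν = μ + (s:ℂ) := by rw [hμdef]; ring
    have hre : μ.re ≤ -δ := by
      have := hμ₀max hmem
      simpa [hδdef] using this
    have hnorm : ‖μ‖ ≤ R := hμ₁max hmem
    have hsq : ∀ z : ℂ, ‖z‖ ^ 2 = z.re ^ 2 + z.im ^ 2 := by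
      intro z
      rw [Complex.sq_norm, Complex.normSq_apply]; ring
    have hnre : ν.re = μ.re + s := by rw [hν_eq]; simp
    have hnim : ν.im = μ.im := by rw [hν_eq]; simp
    have hμsq : μ.re ^ 2 + μ.im ^ 2 ≤ R ^ 2 := by
      rw [← hsq]
      exact pow_le_pow_left₀ (norm_nonneg _) hnorm 2
    have hkey : ‖ν‖ ^ 2 < s ^ 2 := by
      rw [hsq, hnre, hnim]
      have h2s : 2 * s * δ > R ^ 2 := by
        have h1 : R ^ 2 / (2 * δ) ≤ s - 1 := by simp only [hsdef]; linarith
        have h2 : R ^ 2 ≤ (s - 1) * (2 * δ) := by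
          rw [div_le_iff₀ (by positivity)] at h1; linarith
        nlinarith
      nlinarith [hre, hμsq, hs0, hδ]
    exact lt_of_pow_lt_pow_left₀ 2 hs0.le hkey
  -- spectral radius of B is < s
  set r : ℝ≥0 := ⟨s, hs0.le⟩ with hrdef
  have hρ : spectralRadius ℂ (B.map Complex.ofReal) < (r : ℝ≥0∞) := by
    refine spectrum.spectralRadius_lt_of_forall_lt _ fun z hz => ?_
    rw [← NNReal.coe_lt_coe]
    exact hspec z hz
  have hten := spectrum.pow_nnnorm_pow_one_div_tendsto_nhds_spectralRadius
    (B.map Complex.ofReal)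
  have hev : ∀ᶠ k : ℕ in atTop,
      (‖(B.map Complex.ofReal) ^ k‖₊ : ℝ≥0∞) ^ (1/(k:ℝ)) < (r : ℝ≥0∞) :=
    hten.eventually_lt_const hρ
  obtain ⟨k, hkB, hk1⟩ := (hev.and (eventually_ge_atTop 1)).exists
  have hk1' : 0 < k := hk1
  have hk0 : (0:ℝ) < (k:ℝ) := by exact_mod_cast hk1'
  have h5 : (‖(B.map Complex.ofReal) ^ k‖₊ : ℝ≥0∞) < (r : ℝ≥0∞) ^ (k:ℕ) := by
    have h6 := ENNReal.rpow_lt_rpow hkB hk0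
    rw [← ENNReal.rpow_natCast ((r:ℝ≥0∞)) k]
    calc (‖(B.map Complex.ofReal) ^ k‖₊ : ℝ≥0∞)
        = ((‖(B.map Complex.ofReal) ^ k‖₊ : ℝ≥0∞) ^ (1/(k:ℝ))) ^ (k:ℝ) := by
          rw [← ENNReal.rpow_mul, one_div, inv_mul_cancel₀ hk0.ne', ENNReal.rpow_one]
      _ < (r : ℝ≥0∞) ^ (k:ℝ) := h6
  have h7 : ‖B ^ k‖ < s ^ k := by
    have h8 : ‖(B.map Complex.ofReal) ^ k‖₊ < r ^ k := by
      rw [← ENNReal.coe_pow] at h5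
      exact_mod_cast h5
    rw [← map_ofReal_pow, nnnorm_map_ofReal] at h8
    have := (NNReal.coe_lt_coe).2 h8
    rw [coe_nnnorm] at this
    exact this
  -- Neumann series
  set x := s⁻¹ • B with hxdef
  have hx : ∀ i j, 0 ≤ x i j := fun i j => by
    simp only [hxdef, Matrix.smul_apply, smul_eq_mul]
    exact mul_nonneg (inv_nonneg.2 hs0.le) (hB i j)
  set A := x ^ k with hAdef
  have hA : ‖A‖ < 1 := by
    have h9 : A = (s⁻¹) ^ k • B ^ k := by rw [hAdef, hxdef, smul_pow]
    rw [h9, norm_smul]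
    have h10 : ‖(s⁻¹) ^ k‖ = (s⁻¹) ^ k := by
      rw [Real.norm_eq_abs, abs_pow, abs_of_nonneg (inv_nonneg.2 hs0.le)]
    rw [h10]
    have h11 : (0:ℝ) < (s⁻¹) ^ k := by positivity
    calc (s⁻¹) ^ k * ‖B ^ k‖ < (s⁻¹) ^ k * s ^ k := by
          exact (mul_lt_mul_iff_right₀ h11).2 h7
      _ = 1 := by
          rw [← mul_pow, inv_mul_cancel₀ hs0.ne', one_pow]
  have hAnn : ∀ i j, 0 ≤ A i j := pow_entry_nonneg hx k
  set M := ∑' m : ℕ, A ^ m with hMdef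
  have hsumM : HasSum (fun m : ℕ => A ^ m) M :=
    (summable_geometric_of_norm_lt_one hA).hasSum
  have hMnn : ∀ i j, 0 ≤ M i j := by
    intro i j
    set φ : Matrix (Fin n) (Fin n) ℝ →+ ℝ :=
      AddMonoidHom.mk' (fun P => P i j) (fun P Q => rfl) with hφdef
    have hφc : Continuous φ := by
      refine AddMonoidHomClass.continuous_of_bound φ 1 fun P => ?_
      rw [one_mul]
      have := entry_nnnorm_le P i j
      exact_mod_cast this
    have hent : HasSum (fun m : ℕ => (A ^ m) i j) (M i j) := hsumM.map φ hφc
    exact hasSum_le (fun m => pow_entry_nonneg hAnn m i j) hasSum_zero hent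
  -- geometric sum identity
  set C := ∑ m ∈ Finset.range k, x ^ m with hCdef
  have hCnn : ∀ i j, 0 ≤ C i j := by
    intro i j
    rw [hCdef, Matrix.sum_apply]
    exact Finset.sum_nonneg fun m _ => pow_entry_nonneg hx m i j
  have hgeo : ((1 : Matrix (Fin n) (Fin n) ℝ) - x) * C = 1 - A := by
    have := mul_geom_sum x k
    have h12 : ((1 : Matrix (Fin n) (Fin n) ℝ) - x) * C = -((x - 1) * C) := by
      rw [← neg_mul, neg_sub]
    rw [h12, hCdef, this, hAdef, neg_sub]
  have hAM : ((1 : Matrix (Fin n) (Fin n) ℝ) - A) * M = 1 := mul_neg_geom_series A hA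
  set N := C * M with hNdef
  have hN1 : ((1 : Matrix (Fin n) (Fin n) ℝ) - x) * N = 1 := by
    rw [hNdef, ← mul_assoc, hgeo, hAM]
  have hNnn : ∀ i j, 0 ≤ N i j := mul_entry_nonneg hCnn hMnn
  have hNeq : N = 1 + x * N := by
    have h13 : N - x * N = 1 := by rw [sub_mul, one_mul] at hN1; exact hN1
    rw [← h13]; abel
  have hNdiag : ∀ i, 1 ≤ N i i := by
    intro i
    have h14 : N i i = 1 + (x * N) i i := by
      conv_lhs => rw [hNeq]
      simp [Matrix.add_apply, Matrix.one_apply_eq]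
    rw [h14]
    have := mul_entry_nonneg hx hNnn i i
    linarith
  -- construct u
  refine ⟨N *ᵥ (fun _ => 1), ?_, ?_⟩
  · intro i
    have h15 : (N *ᵥ (fun _ => 1)) i = ∑ j, N i j := by
      simp [Matrix.mulVec, dotProduct]
    rw [h15]
    have h16 : N i i ≤ ∑ j, N i j :=
      Finset.single_le_sum (f := fun j => N i j) (fun j _ => hNnn i j) (Finset.mem_univ i)
    have := hNdiag i
    linarith
  · intro i
    have hVx : V = (-s) • ((1 : Matrix (Fin n) (Fin n) ℝ) - x) := by
      rw [hxdef, hBdef]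
      ext i j
      simp only [Matrix.smul_apply, Matrix.sub_apply, Matrix.add_apply, Matrix.one_apply,
        smul_eq_mul]
      split_ifs <;> (field_simp; try ring)
    have h17 : V *ᵥ (N *ᵥ (fun _ => 1)) = fun _ => -s := by
      rw [hVx, smul_mulVec, Matrix.mulVec_mulVec, hN1, Matrix.one_mulVec]
      funext i
      simp
    rw [h17]
    simpa using hs0


lemma exists_small_t {n : ℕ} (a b : Fin n → ℝ)
    (h : ∀ i, a i < 0 ∨ (a i ≤ 0 ∧ b i < 0)) :
    ∃ t : ℝ, 0 < t ∧ ∀ i, a i + t * b i < 0 := by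
  by_cases hn : Nonempty (Fin n)
  · set g : Fin n → ℝ := fun i => if 0 < b i then -a i / (2 * b i) else 1 with hg
    have hgpos : ∀ i, 0 < g i := by
      intro i
      have hgi : g i = if 0 < b i then -a i / (2 * b i) else 1 := rfl
      rw [hgi]
      split_ifs with hb
      · have ha : a i < 0 := by
          rcases h i with h' | ⟨_, h2⟩
          · exact h'
          · linarith
        exact div_pos (by linarith) (by linarith)
      · norm_num
    refine ⟨Finset.univ.inf' (Finset.univ_nonempty) g, ?_, ?_⟩
    · obtain ⟨i, _, hi⟩ := Finset.exists_mem_eq_inf' (Finset.univ_nonempty) g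
      rw [hi]; exact hgpos i
    · intro i
      set t := Finset.univ.inf' (Finset.univ_nonempty) g with ht
      have htpos : 0 < t := by
        obtain ⟨i', _, hi'⟩ := Finset.exists_mem_eq_inf' (Finset.univ_nonempty) g
        rw [ht, hi']; exact hgpos i'
      have hle : t ≤ g i := Finset.inf'_le g (Finset.mem_univ i)
      rcases h i with ha | ⟨ha, hb⟩
      · by_cases hbi : 0 < b i
        · have hgi : g i = -a i / (2 * b i) := by rw [hg]; simp [hbi]
          have h1 : t * b i ≤ (-a i / (2 * b i)) * b i := by
            apply mul_le_mul_of_nonneg_right _ hbi.le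
            rw [← hgi]; exact hle
          have h2 : (-a i / (2 * b i)) * b i = -a i / 2 := by
            field_simp
          nlinarith
        · push_neg at hbi
          nlinarith
      · nlinarith
  · exact ⟨1, one_pos, fun i => absurd ⟨i⟩ hn⟩


/-- The Relaxing Lemma: for `V` Metzler and Hurwitz and `F ≥ 0` with `F ≠ 0`,
`inf { r > 0 : ∃ w > 0, Vw < 0, (F + rV) w < 0 } = inf { r > 0 : ∃ w > 0, Vw ≤ 0, (F + rV) w ≤ 0 }`. -/
theorem relaxing_lemma {n : ℕ} (V F : Matrix (Fin n) (Fin n) ℝ)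
    (hVmetzler : IsMetzler V) (hVhurwitz : IsHurwitz V)
    (hF : ∀ i j, 0 ≤ F i j) (hFne : F ≠ 0) :
    sInf {r : ℝ | 0 < r ∧ ∃ w : Fin n → ℝ, (∀ i, 0 < w i) ∧ (∀ i, (V *ᵥ w) i < 0) ∧
        ∀ i, ((F + r • V) *ᵥ w) i < 0}
      = sInf {r : ℝ | 0 < r ∧ ∃ w : Fin n → ℝ, (∀ i, 0 < w i) ∧ (∀ i, (V *ᵥ w) i ≤ 0) ∧
        ∀ i, ((F + r • V) *ᵥ w) i ≤ 0} := by
  obtain ⟨u, hu, hVu⟩ := exists_pos_of_metzler_hurwitz V hVmetzler hVhurwitz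
  set S := {r : ℝ | 0 < r ∧ ∃ w : Fin n → ℝ, (∀ i, 0 < w i) ∧ (∀ i, (V *ᵥ w) i < 0) ∧
      ∀ i, ((F + r • V) *ᵥ w) i < 0} with hS
  set T := {r : ℝ | 0 < r ∧ ∃ w : Fin n → ℝ, (∀ i, 0 < w i) ∧ (∀ i, (V *ᵥ w) i ≤ 0) ∧
      ∀ i, ((F + r • V) *ᵥ w) i ≤ 0} with hT
  have hST : S ⊆ T := by
    rintro r ⟨hr, w, hw, h1, h2⟩
    exact ⟨hr, w, hw, fun i => (h1 i).le, fun i => (h2 i).le⟩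
  have key : ∀ r ∈ T, ∀ ε : ℝ, 0 < ε → r + ε ∈ S := by
    rintro r ⟨hr, w, hw, h1, h2⟩ ε hε
    set r' := r + ε with hr'
    have hr'0 : 0 < r' := by positivity
    set a : Fin n → ℝ := fun i => ((F + r' • V) *ᵥ w) i with ha
    set b : Fin n → ℝ := fun i => ((F + r' • V) *ᵥ u) i with hb
    have hexp : ∀ (ρ : ℝ) (v : Fin n → ℝ) (i : Fin n),
        ((F + ρ • V) *ᵥ v) i = (F *ᵥ v) i + ρ * (V *ᵥ v) i := by
      intro ρ v i
      rw [Matrix.add_mulVec, Matrix.smul_mulVec]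
      simp
    have hFw : ∀ i, 0 ≤ (F *ᵥ w) i := by
      intro i
      rw [Matrix.mulVec, dotProduct]
      exact Finset.sum_nonneg fun j _ => mul_nonneg (hF i j) (hw j).le
    have hab : ∀ i, a i < 0 ∨ (a i ≤ 0 ∧ b i < 0) := by
      intro i
      have h2i := h2 i
      rw [hexp r w i] at h2i
      rcases lt_or_eq_of_le (hFw i) with hFwi | hFwi
      · left
        have hVwi : (V *ᵥ w) i < 0 := by nlinarith
        rw [ha]
        show ((F + r' • V) *ᵥ w) i < 0
        rw [hexp r' w i]
        have : r * (V *ᵥ w) i + ε * (V *ᵥ w) i = r' * (V *ᵥ w) i := by rw [hr']; ring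
        nlinarith
      · right
        have hFrow : ∀ j, F i j = 0 := by
          intro j
          have hsum : ∑ j, F i j * w j = 0 := by
            rw [Matrix.mulVec, dotProduct] at hFwi
            exact hFwi.symm
          have hall := (Finset.sum_eq_zero_iff_of_nonneg
            (fun j _ => mul_nonneg (hF i j) (hw j).le)).1 hsum j (Finset.mem_univ j)
          rcases mul_eq_zero.1 hall with h' | h'
          · exact h'
          · exact absurd h' (hw j).ne'
        have hFu : (F *ᵥ u) i = 0 := by
          rw [Matrix.mulVec, dotProduct]
          exact Finset.sum_eq_zero fun j _ => by rw [hFrow j, zero_mul]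
        constructor
        · rw [ha]
          show ((F + r' • V) *ᵥ w) i ≤ 0
          rw [hexp r' w i, ← hFwi]
          have := h1 i
          nlinarith
        · rw [hb]
          show ((F + r' • V) *ᵥ u) i < 0
          rw [hexp r' u i, hFu]
          have := hVu i
          nlinarith
    obtain ⟨t, ht, htlt⟩ := exists_small_t a b hab
    refine ⟨hr'0, w + t • u, ?_, ?_, ?_⟩
    · intro i
      have := hw i; have := hu i
      simp only [Pi.add_apply, Pi.smul_apply, smul_eq_mul]
      nlinarith
    · intro i
      rw [Matrix.mulVec_add, Matrix.mulVec_smul]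
      simp only [Pi.add_apply, Pi.smul_apply, smul_eq_mul]
      have := h1 i; have := hVu i
      nlinarith
    · intro i
      rw [Matrix.mulVec_add, Matrix.mulVec_smul]
      simp only [Pi.add_apply, Pi.smul_apply, smul_eq_mul]
      exact htlt i
  by_cases hTne : T.Nonempty
  · have hSne : S.Nonempty := by
      obtain ⟨r, hr⟩ := hTne
      exact ⟨r + 1, key r hr 1 one_pos⟩
    have hTbdd : BddBelow T := ⟨0, fun r hr => hr.1.le⟩
    have hSbdd : BddBelow S := ⟨0, fun r hr => hr.1.le⟩
    apply le_antisymm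
    · apply le_csInf hTne
      intro r hrT
      refine le_of_forall_pos_le_add fun ε hε => ?_
      calc sInf S ≤ r + ε := csInf_le hSbdd (key r hrT ε hε)
        _ = r + ε := rfl
    · exact csInf_le_csInf hTbdd hSne hST
  · have hT0 : T = ∅ := Set.not_nonempty_iff_eq_empty.1 hTne
    have hS0 : S = ∅ := Set.eq_empty_of_subset_empty (hT0 ▸ hST)
    rw [hS0, hT0]
end

section
/- Let V and V' be n×n real Metzler and Hurwitz matrices with V' ≤ V entrywise. Then V⁻¹ ≤ V'⁻¹ ≤ 0 entrywise. -/
open Matrix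

open Filter Topology Pointwise
attribute [local instance] Matrix.linftyOpNormedRing Matrix.linftyOpNormedAlgebra

lemma entry_norm_le_linfty {n : ℕ} (B : Matrix (Fin n) (Fin n) ℂ) (i j : Fin n) :
    ‖B i j‖ ≤ ‖B‖ := by
  have h1 : ‖B i j‖₊ ≤ ∑ k, ‖B i k‖₊ :=
    Finset.single_le_sum (f := fun k => ‖B i k‖₊) (fun _ _ => zero_le) (Finset.mem_univ j)
  have h2 : (∑ k, ‖B i k‖₊) ≤ Finset.univ.sup (fun i => ∑ k, ‖B i k‖₊) :=
    Finset.le_sup (f := fun i => ∑ k, ‖B i k‖₊) (Finset.mem_univ i)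
  rw [Matrix.linfty_opNorm_def]
  exact_mod_cast h1.trans h2

lemma pow_norm_tendsto_zero_of_specrad {A : Type*} [NormedRing A] [NormedAlgebra ℂ A]
    [CompleteSpace A] (a : A) (h : spectralRadius ℂ a < 1) :
    Tendsto (fun m : ℕ => ‖a ^ m‖) atTop (𝓝 0) := by
  obtain ⟨t, ht1, ht2⟩ := exists_between h
  lift t to NNReal using ne_top_of_lt ht2
  have hg := spectrum.pow_nnnorm_pow_one_div_tendsto_nhds_spectralRadius a
  have hev : ∀ᶠ m : ℕ in atTop, (‖a ^ m‖₊ : ENNReal) ^ (1 / (m:ℝ)) < (t : ENNReal) :=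
    hg.eventually_lt_const ht1
  have ht' : (t:ℝ) < 1 := by exact_mod_cast ht2
  have hbound : ∀ᶠ m : ℕ in atTop, ‖a ^ m‖ ≤ (t:ℝ) ^ m := by
    filter_upwards [hev, eventually_ge_atTop 1] with m hm hm1
    have hm0 : (m:ℝ) ≠ 0 := by positivity
    have hx : (‖a ^ m‖₊ : ENNReal) = ((‖a ^ m‖₊ : ENNReal) ^ (1/(m:ℝ))) ^ (m:ℝ) := by
      rw [← ENNReal.rpow_mul, one_div, inv_mul_cancel₀ hm0, ENNReal.rpow_one]
    have h2 : (‖a ^ m‖₊ : ENNReal) ≤ (t:ENNReal) ^ (m:ℝ) := by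
      rw [hx]
      exact ENNReal.rpow_le_rpow hm.le (Nat.cast_nonneg m)
    rw [ENNReal.rpow_natCast, ← ENNReal.coe_pow, ENNReal.coe_le_coe] at h2
    calc ‖a ^ m‖ = ((‖a ^ m‖₊ : NNReal) : ℝ) := rfl
      _ ≤ ((t ^ m : NNReal) : ℝ) := by exact_mod_cast h2
      _ = (t:ℝ) ^ m := by push_cast; ring
  refine squeeze_zero' (Eventually.of_forall fun m => norm_nonneg _) hbound ?_
  exact tendsto_pow_atTop_nhds_zero_of_lt_one t.2 ht'

lemma metzler_hurwitz_key {n : ℕ} (V : Matrix (Fin n) (Fin n) ℝ)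
    (hM : IsMetzler V) (hH : IsHurwitz V) :
    IsUnit V.det ∧ ∀ i j, V⁻¹ i j ≤ 0 := by
  rcases Nat.eq_zero_or_pos n with hn | hn
  · subst hn
    exact ⟨by simp [Matrix.det_fin_zero], fun i => i.elim0⟩
  haveI : Nonempty (Fin n) := Fin.pos_iff_nonempty.mp hn
  set W : Matrix (Fin n) (Fin n) ℂ := V.map Complex.ofReal with hW
  have hWmap : W = Complex.ofRealHom.mapMatrix V := rfl
  have hWunit : IsUnit W := by
    rw [← spectrum.zero_notMem_iff ℂ]
    intro h0
    exact absurd (hH 0 h0) (by simp)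
  have hVdet : IsUnit V.det := by
    have h1 : IsUnit W.det := W.isUnit_iff_isUnit_det.mp hWunit
    rw [hWmap, ← RingHom.map_det] at h1
    have h2 : (V.det : ℂ) ≠ 0 := by simpa using h1.ne_zero
    exact isUnit_iff_ne_zero.mpr (by exact_mod_cast h2)
  have hKc : IsCompact (spectrum ℂ W) := spectrum.isCompact W
  have hKne : (spectrum ℂ W).Nonempty := spectrum.nonempty W
  obtain ⟨μM, hμM, hmax'⟩ := hKc.exists_isMaxOn hKne continuous_norm.continuousOn
  obtain ⟨μr, hμr, hrmax'⟩ := hKc.exists_isMaxOn hKne Complex.continuous_re.continuousOn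
  have hmax : ∀ μ ∈ spectrum ℂ W, ‖μ‖ ≤ ‖μM‖ := fun μ hμ => hmax' hμ
  have hrmax : ∀ μ ∈ spectrum ℂ W, μ.re ≤ μr.re := fun μ hμ => hrmax' hμ
  have hε : 0 < -μr.re := by linarith [hH μr hμr]
  set d : ℝ := Finset.univ.sup' Finset.univ_nonempty (fun i => -V i i) with hd
  set s : ℝ := max 0 (max d (‖μM‖ ^ 2 / (2 * (-μr.re)))) + 1 with hs
  have hs0 : 0 < s := by
    have := le_max_left (0:ℝ) (max d (‖μM‖ ^ 2 / (2 * (-μr.re))))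
    rw [hs]; linarith
  have hsne : s ≠ 0 := ne_of_gt hs0
  have hsd : ∀ i, -V i i ≤ s := by
    intro i
    have h1 : -V i i ≤ d := Finset.le_sup' (fun i => -V i i) (Finset.mem_univ i)
    have h2 := le_max_left d (‖μM‖ ^ 2 / (2 * (-μr.re)))
    have h3 := le_max_right (0:ℝ) (max d (‖μM‖ ^ 2 / (2 * (-μr.re))))
    rw [hs]; linarith
  have hsK : ∀ μ ∈ spectrum ℂ W, ‖μ + s‖ < s := by
    intro μ hμ
    have h1 : ‖μ‖ ≤ ‖μM‖ := hmax μ hμ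
    have h2 : μ.re ≤ μr.re := hrmax μ hμ
    have h3 : ‖μM‖ ^ 2 / (2 * (-μr.re)) < s := by
      have ha := le_max_right d (‖μM‖ ^ 2 / (2 * (-μr.re)))
      have hb := le_max_right (0:ℝ) (max d (‖μM‖ ^ 2 / (2 * (-μr.re))))
      rw [hs]; linarith
    have h4 : ‖μM‖ ^ 2 < 2 * (-μr.re) * s := by
      rw [div_lt_iff₀ (by linarith)] at h3
      linarith [h3]
    have habs : ‖μ + (s:ℂ)‖ ^ 2 = ‖μ‖ ^ 2 + 2 * s * μ.re + s ^ 2 := by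
      rw [Complex.sq_norm, Complex.sq_norm, Complex.normSq_apply, Complex.normSq_apply]
      simp [Complex.add_re, Complex.add_im, Complex.ofReal_re, Complex.ofReal_im]
      ring
    have hsq : ‖μ‖ ^ 2 ≤ ‖μM‖ ^ 2 :=
      pow_le_pow_left₀ (norm_nonneg μ) h1 2
    nlinarith [norm_nonneg (μ + (s:ℂ)), habs, hsq, h2, h4, hs0]
  -- the shifted nonnegative matrix
  set C : Matrix (Fin n) (Fin n) ℝ := s⁻¹ • (V + s • (1 : Matrix (Fin n) (Fin n) ℝ)) with hC
  have hC0 : ∀ i j, 0 ≤ C i j := by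
    intro i j
    have hCij : C i j = s⁻¹ * (V i j + s * (if i = j then (1:ℝ) else 0)) := by
      simp only [hC, Matrix.smul_apply, Matrix.add_apply, Matrix.one_apply, smul_eq_mul]
      try (split_ifs <;> ring)
    rw [hCij]
    split_ifs with h
    · have := hsd i
      subst h
      have h2 : 0 ≤ V i i + s * 1 := by linarith [hsd i]
      exact mul_nonneg (inv_nonneg.mpr hs0.le) h2
    · have h2 : 0 ≤ V i j + s * 0 := by simpa using hM i j h
      exact mul_nonneg (inv_nonneg.mpr hs0.le) h2
  set X : Matrix (Fin n) (Fin n) ℂ := algebraMap ℂ (Matrix (Fin n) (Fin n) ℂ) ((s:ℝ):ℂ) + W with hX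
  set Cc : Matrix (Fin n) (Fin n) ℂ := C.map Complex.ofReal with hCc
  have hsC : ((s:ℝ):ℂ) ≠ 0 := by exact_mod_cast hsne
  have hCcX : Cc = ((s:ℝ):ℂ)⁻¹ • X := by
    ext i j
    simp only [hCc, hX, Matrix.map_apply, hC, Matrix.smul_apply, Matrix.add_apply,
      Matrix.one_apply, smul_eq_mul, Matrix.algebraMap_matrix_apply, hW, Algebra.algebraMap_self,
      RingHom.id_apply]
    rcases eq_or_ne i j with rfl | hij
    · simp only [if_pos rfl]
      push_cast
      field_simp
      try ring
    · simp only [if_neg hij]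
      push_cast
      field_simp
      try ring
  have hXspec : spectrum ℂ X = {((s:ℝ):ℂ)} + spectrum ℂ W :=
    (spectrum.singleton_add_eq W ((s:ℝ):ℂ)).symm
  have hCcspec : spectrum ℂ Cc = (Units.mk0 (((s:ℝ):ℂ)⁻¹) (inv_ne_zero hsC)) • spectrum ℂ X := by
    rw [hCcX]
    simpa [Units.smul_def] using spectrum.unit_smul_eq_smul X (Units.mk0 (((s:ℝ):ℂ)⁻¹) (inv_ne_zero hsC))
  have hspecball : ∀ ν ∈ spectrum ℂ Cc, ‖ν‖₊ < 1 := by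
    intro ν hν
    rw [hCcspec] at hν
    obtain ⟨y, hy, rfl⟩ := hν
    rw [hXspec] at hy
    obtain ⟨a, ha, μ, hμ, rfl⟩ := Set.mem_add.mp hy
    rw [Set.mem_singleton_iff] at ha
    subst ha
    have hnorm : ‖(Units.mk0 (((s:ℝ):ℂ)⁻¹) (inv_ne_zero hsC)) • (((s:ℝ):ℂ) + μ)‖ < 1 := by
      rw [Units.smul_def, smul_eq_mul, norm_mul]
      have h1 : ‖(((s:ℝ):ℂ))⁻¹‖ = s⁻¹ := by
        rw [norm_inv, Complex.norm_real, Real.norm_eq_abs, abs_of_pos hs0]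
      have h2 : ‖((s:ℝ):ℂ) + μ‖ < s := by
        rw [show ((s:ℝ):ℂ) + μ = μ + s by ring]
        exact hsK μ hμ
      calc ‖(Units.mk0 (((s:ℝ):ℂ)⁻¹) (inv_ne_zero hsC) : ℂ)‖ * ‖((s:ℝ):ℂ) + μ‖
          = s⁻¹ * ‖((s:ℝ):ℂ) + μ‖ := by rw [show ((Units.mk0 (((s:ℝ):ℂ)⁻¹) (inv_ne_zero hsC)) : ℂ) = (((s:ℝ):ℂ))⁻¹ from rfl, h1]
        _ < s⁻¹ * s := by
            exact mul_lt_mul_of_pos_left h2 (inv_pos.mpr hs0)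
        _ = 1 := inv_mul_cancel₀ hsne
    exact_mod_cast hnorm
  have hρ : spectralRadius ℂ Cc < 1 := by
    have h := spectrum.spectralRadius_lt_of_forall_lt (a := Cc) (r := 1) hspecball
    simpa using h
  have hT : Tendsto (fun m : ℕ => ‖Cc ^ m‖) atTop (𝓝 0) :=
    pow_norm_tendsto_zero_of_specrad Cc hρ
  have hmapC : ∀ m : ℕ, (C ^ m).map Complex.ofReal = Cc ^ m := by
    intro m
    have h := map_pow (Complex.ofRealHom.mapMatrix) C m
    exact h
  have hent : ∀ i j, Tendsto (fun m : ℕ => (C ^ m) i j) atTop (𝓝 0) := by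
    intro i j
    apply squeeze_zero_norm (fun m => ?_) hT
    have h1 : ‖(Cc ^ m) i j‖ ≤ ‖Cc ^ m‖ := entry_norm_le_linfty _ i j
    have h2 : (Cc ^ m) i j = (((C ^ m) i j : ℝ) : ℂ) := by rw [← hmapC m]; rfl
    rw [h2] at h1
    simpa [Complex.norm_real] using h1
  set D : Matrix (Fin n) (Fin n) ℝ := 1 - C with hD
  have hDc : D.map Complex.ofReal = 1 - Cc := by
    ext i j
    simp [hD, Matrix.map_apply, Matrix.sub_apply, Matrix.one_apply, apply_ite, hCc]
  have h1mem : (1:ℂ) ∉ spectrum ℂ Cc := fun h => absurd (hspecball 1 h) (by simp)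
  have hDcu : IsUnit (1 - Cc) := by
    have h := spectrum.notMem_iff.mp h1mem
    simpa using h
  have hDdet : IsUnit D.det := by
    have h1 : IsUnit (1 - Cc).det := (Matrix.isUnit_iff_isUnit_det (1 - Cc)).mp hDcu
    rw [← hDc] at h1
    have h2 : (D.map Complex.ofReal).det = ((D.det : ℝ) : ℂ) := by
      rw [show D.map Complex.ofReal = Complex.ofRealHom.mapMatrix D from rfl, ← RingHom.map_det]
      rfl
    rw [h2] at h1
    exact isUnit_iff_ne_zero.mpr (by exact_mod_cast h1.ne_zero)
  have hCpow0 : ∀ (m : ℕ) (i j : Fin n), 0 ≤ (C ^ m) i j := by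
    intro m
    induction m with
    | zero =>
        intro i j
        rw [pow_zero]
        rcases eq_or_ne i j with rfl | hij
        · simp [Matrix.one_apply]
        · simp [Matrix.one_apply, hij]
    | succ m ih =>
        intro i j
        rw [pow_succ, Matrix.mul_apply]
        exact Finset.sum_nonneg fun k _ => mul_nonneg (ih i k) (hC0 k j)
  have hgeom : ∀ m : ℕ, (∑ k ∈ Finset.range m, C ^ k) = D⁻¹ - C ^ m * D⁻¹ := by
    intro m
    have h1 : (∑ k ∈ Finset.range m, C ^ k) * (C - 1) = C ^ m - 1 := geom_sum_mul C m
    have h2 : (∑ k ∈ Finset.range m, C ^ k) * D = 1 - C ^ m := by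
      have hD' : D = -(C - 1) := by rw [hD, neg_sub]
      rw [hD', mul_neg, h1, neg_sub]
    calc (∑ k ∈ Finset.range m, C ^ k)
        = (∑ k ∈ Finset.range m, C ^ k) * D * D⁻¹ := by
          rw [mul_assoc, Matrix.mul_nonsing_inv D hDdet, mul_one]
      _ = (1 - C ^ m) * D⁻¹ := by rw [h2]
      _ = D⁻¹ - C ^ m * D⁻¹ := by rw [sub_mul, one_mul]
  have hDinv0 : ∀ i j, 0 ≤ D⁻¹ i j := by
    intro i j
    have hg : Tendsto (fun m : ℕ => (C ^ m * D⁻¹) i j) atTop (𝓝 0) := by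
      have h := tendsto_finset_sum (Finset.univ : Finset (Fin n))
        (fun l _ => (hent i l).mul_const (D⁻¹ l j))
      simpa [Matrix.mul_apply] using h
    have hconst : Tendsto (fun m : ℕ => D⁻¹ i j - (C ^ m * D⁻¹) i j) atTop (𝓝 (D⁻¹ i j)) := by
      simpa using tendsto_const_nhds.sub hg
    refine ge_of_tendsto' hconst (fun m => ?_)
    have h2 : (∑ k ∈ Finset.range m, C ^ k) i j = D⁻¹ i j - (C ^ m * D⁻¹) i j := by
      rw [hgeom m, Matrix.sub_apply]
    rw [← h2, Matrix.sum_apply]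
    exact Finset.sum_nonneg fun k _ => hCpow0 k i j
  have hsC1 : s • C = V + s • (1 : Matrix (Fin n) (Fin n) ℝ) := by
    rw [hC, smul_smul, mul_inv_cancel₀ hsne, one_smul]
  have hVD : V = (-s) • D := by
    rw [hD, smul_sub, neg_smul, neg_smul, sub_neg_eq_add, hsC1]
    abel
  have hsu : IsUnit (-s) := isUnit_iff_ne_zero.mpr (neg_ne_zero.mpr hsne)
  have hVinv : V⁻¹ = (-s)⁻¹ • D⁻¹ := by
    have h := Matrix.inv_smul' D hsu.unit hDdet
    rw [Units.smul_def, hsu.unit_spec] at h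
    rw [hVD, h, Units.smul_def]
    congr 1
    rw [Units.val_inv_eq_inv_val, hsu.unit_spec]
  refine ⟨hVdet, fun i j => ?_⟩
  rw [hVinv, Matrix.smul_apply, smul_eq_mul]
  have hneg : (-s)⁻¹ ≤ 0 := by
    rw [inv_nonpos]
    linarith
  exact mul_nonpos_iff.mpr (Or.inr ⟨hneg, hDinv0 i j⟩)

/-- If `V` and `V'` are Metzler and Hurwitz with `V' ≤ V` entrywise, then
`V⁻¹ ≤ V'⁻¹ ≤ 0` entrywise. -/
theorem inv_le_inv_le_zero_of_metzler_hurwitz {n : ℕ} (V V' : Matrix (Fin n) (Fin n) ℝ)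
    (hVmetzler : IsMetzler V) (hVhurwitz : IsHurwitz V)
    (hV'metzler : IsMetzler V') (hV'hurwitz : IsHurwitz V')
    (hle : ∀ i j, V' i j ≤ V i j) :
    ∀ i j, V⁻¹ i j ≤ V'⁻¹ i j ∧ V'⁻¹ i j ≤ 0 := by
  obtain ⟨hVdet, hVinv⟩ := metzler_hurwitz_key V hVmetzler hVhurwitz
  obtain ⟨hV'det, hV'inv⟩ := metzler_hurwitz_key V' hV'metzler hV'hurwitz
  have hid : V⁻¹ * (V' - V) * V'⁻¹ = V⁻¹ - V'⁻¹ := by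
    calc V⁻¹ * (V' - V) * V'⁻¹ = V⁻¹ * (V' * V'⁻¹) - V⁻¹ * V * V'⁻¹ := by
          rw [mul_sub, sub_mul, mul_assoc]
      _ = V⁻¹ - V'⁻¹ := by
          rw [Matrix.mul_nonsing_inv V' hV'det, Matrix.nonsing_inv_mul V hVdet, mul_one, one_mul]
  intro i j
  refine ⟨?_, hV'inv i j⟩
  have h : (V⁻¹ * (V' - V) * V'⁻¹) i j ≤ 0 := by
    rw [Matrix.mul_apply]
    refine Finset.sum_nonpos fun l _ => ?_
    have h1 : 0 ≤ (V⁻¹ * (V' - V)) i l := by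
      rw [Matrix.mul_apply]
      refine Finset.sum_nonneg fun k _ => ?_
      have h2 : (V' - V) k l ≤ 0 := by
        rw [Matrix.sub_apply]
        exact sub_nonpos.mpr (hle k l)
      exact mul_nonneg_iff.mpr (Or.inr ⟨hVinv i k, h2⟩)
    exact mul_nonpos_iff.mpr (Or.inl ⟨h1, hV'inv l j⟩)
  rw [hid, Matrix.sub_apply] at h
  linarith
end

section
/- (Monotonicity of the basic reproduction number) Let k, n be positive integers and let F, V_od : ℝᵏ → ℝⁿˣⁿ be matrix-valued functions taking entrywise-nonnegative values that are entrywise non-increasing in θ (with respect to the entrywise order on ℝᵏ), and let V_d : ℝᵏ → ℝⁿˣⁿ take diagonal, entrywise-nonnegative values and be entrywise non-decreasing in θ. Suppose θ, θ' ∈ ℝᵏ satisfy θ ≤ θ' entrywise and that both V(θ) := V_od(θ) - V_d(θ) and V(θ') := V_od(θ') - V_d(θ') are Metzler and Hurwitz. Then R₀(θ') ≤ R₀(θ), where R₀(θ) = ρ( F(θ) · V(θ)⁻¹ ). -/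
open Matrix

namespace R0Aux

open scoped NNReal ENNReal Pointwise

attribute [local instance] Matrix.linftyOpNormedAddCommGroup Matrix.linftyOpNormedRing
  Matrix.linftyOpNormedAlgebra Matrix.linftyOpNormedSpace

variable {n : ℕ}

noncomputable local instance : CompleteSpace (Matrix (Fin n) (Fin n) ℂ) :=
  (by infer_instance : CompleteSpace (Fin n → Fin n → ℂ))

/-- Complexification of a real matrix. -/
def mapC (A : Matrix (Fin n) (Fin n) ℝ) : Matrix (Fin n) (Fin n) ℂ :=
  A.map Complex.ofReal

lemma mapC_eq (A : Matrix (Fin n) (Fin n) ℝ) :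
    mapC A = Complex.ofRealHom.mapMatrix A := rfl

lemma mapC_mul (A B : Matrix (Fin n) (Fin n) ℝ) : mapC (A * B) = mapC A * mapC B := by
  simp [mapC_eq, _root_.map_mul]

lemma mapC_pow (A : Matrix (Fin n) (Fin n) ℝ) (m : ℕ) : mapC (A ^ m) = (mapC A) ^ m := by
  simp [mapC_eq, map_pow]

lemma mapC_one : mapC (1 : Matrix (Fin n) (Fin n) ℝ) = 1 := by
  simp [mapC_eq, _root_.map_one]

lemma nnnorm_mapC (A : Matrix (Fin n) (Fin n) ℝ) : ‖mapC A‖₊ = ‖A‖₊ := by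
  rw [Matrix.linfty_opNNNorm_def, Matrix.linfty_opNNNorm_def]
  congr 1
  funext i
  congr 1
  funext j
  ext
  simp [mapC, Matrix.map_apply, Complex.norm_real]

lemma mul_entry_nonneg {A B : Matrix (Fin n) (Fin n) ℝ}
    (hA : ∀ i j, 0 ≤ A i j) (hB : ∀ i j, 0 ≤ B i j) :
    ∀ i j, 0 ≤ (A * B) i j := by
  intro i j
  rw [Matrix.mul_apply]
  exact Finset.sum_nonneg fun k _ => mul_nonneg (hA i k) (hB k j)

lemma mul_entry_le {A B C D : Matrix (Fin n) (Fin n) ℝ}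
    (hA : ∀ i j, 0 ≤ A i j) (hAB : ∀ i j, A i j ≤ B i j)
    (hC : ∀ i j, 0 ≤ C i j) (hCD : ∀ i j, C i j ≤ D i j) :
    ∀ i j, (A * C) i j ≤ (B * D) i j := by
  intro i j
  rw [Matrix.mul_apply, Matrix.mul_apply]
  refine Finset.sum_le_sum fun k _ => ?_
  exact mul_le_mul (hAB i k) (hCD k j) (hC k j) (le_trans (hA i k) (hAB i k))

lemma pow_entry_nonneg {A : Matrix (Fin n) (Fin n) ℝ} (hA : ∀ i j, 0 ≤ A i j) (m : ℕ) :
    ∀ i j, 0 ≤ (A ^ m) i j := by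
  induction m with
  | zero => intro i j; simp [Matrix.one_apply]; split <;> norm_num
  | succ m ih =>
      rw [pow_succ]
      exact mul_entry_nonneg ih hA

lemma pow_entry_le {A B : Matrix (Fin n) (Fin n) ℝ}
    (hA : ∀ i j, 0 ≤ A i j) (hAB : ∀ i j, A i j ≤ B i j) (m : ℕ) :
    ∀ i j, (A ^ m) i j ≤ (B ^ m) i j := by
  induction m with
  | zero => intro i j; simp
  | succ m ih =>
      rw [pow_succ, pow_succ]
      exact mul_entry_le (pow_entry_nonneg hA m) ih hA hAB

lemma nnnorm_le_of_entry_le {A B : Matrix (Fin n) (Fin n) ℝ}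
    (hA : ∀ i j, 0 ≤ A i j) (hAB : ∀ i j, A i j ≤ B i j) : ‖A‖₊ ≤ ‖B‖₊ := by
  rw [Matrix.linfty_opNNNorm_def, Matrix.linfty_opNNNorm_def]
  refine Finset.sup_mono_fun fun i _ => Finset.sum_le_sum fun j _ => ?_
  have h1 : ‖A i j‖ ≤ ‖B i j‖ := by
    rw [Real.norm_eq_abs, Real.norm_eq_abs, abs_of_nonneg (hA i j),
      abs_of_nonneg (le_trans (hA i j) (hAB i j))]
    exact hAB i j
  exact h1

/-- Monotonicity of the (Banach-algebra) spectral radius on entrywise-ordered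
nonnegative real matrices, via Gelfand's formula. -/
lemma spectralRadius_mono {A B : Matrix (Fin n) (Fin n) ℝ}
    (hA : ∀ i j, 0 ≤ A i j) (hAB : ∀ i j, A i j ≤ B i j) :
    spectralRadius ℂ (mapC A) ≤ spectralRadius ℂ (mapC B) := by
  have gA := spectrum.pow_nnnorm_pow_one_div_tendsto_nhds_spectralRadius (mapC A)
  have gB := spectrum.pow_nnnorm_pow_one_div_tendsto_nhds_spectralRadius (mapC B)
  refine le_of_tendsto_of_tendsto gA gB (Filter.Eventually.of_forall fun m => ?_)
  have h1 : ‖(mapC A) ^ m‖₊ ≤ ‖(mapC B) ^ m‖₊ := by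
    rw [← mapC_pow, ← mapC_pow, nnnorm_mapC, nnnorm_mapC]
    exact nnnorm_le_of_entry_le (pow_entry_nonneg hA m) (pow_entry_le hA hAB m)
  exact ENNReal.rpow_le_rpow (by exact_mod_cast h1) (by positivity)

lemma specRad_def (A : Matrix (Fin n) (Fin n) ℝ) :
    specRad A = sSup {x : ℝ | ∃ μ ∈ spectrum ℂ (mapC A), x = ‖μ‖} := rfl

lemma bddAbove_absSpec (hn : 0 < n) (A : Matrix (Fin n) (Fin n) ℝ) :
    BddAbove {x : ℝ | ∃ μ ∈ spectrum ℂ (mapC A), x = ‖μ‖} := by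
  haveI : Nonempty (Fin n) := ⟨⟨0, hn⟩⟩
  refine ⟨‖mapC A‖, ?_⟩
  rintro x ⟨μ, hμ, rfl⟩
  have := spectrum.norm_le_norm_of_mem hμ
  simpa using this

lemma nonneg_specRad (hn : 0 < n) (A : Matrix (Fin n) (Fin n) ℝ) : 0 ≤ specRad A := by
  haveI : Nonempty (Fin n) := ⟨⟨0, hn⟩⟩
  obtain ⟨μ, hμ⟩ := spectrum.nonempty (mapC A)
  rw [specRad_def]
  have hmem : ‖μ‖ ∈ {x : ℝ | ∃ μ ∈ spectrum ℂ (mapC A), x = ‖μ‖} :=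
    ⟨μ, hμ, rfl⟩
  exact le_trans (norm_nonneg μ) (le_csSup (bddAbove_absSpec hn A) hmem)

lemma abs_le_specRad (hn : 0 < n) {A : Matrix (Fin n) (Fin n) ℝ} {μ : ℂ}
    (hμ : μ ∈ spectrum ℂ (mapC A)) : ‖μ‖ ≤ specRad A :=
  le_csSup (bddAbove_absSpec hn A) ⟨μ, hμ, rfl⟩

lemma specRad_le_specRad (hn : 0 < n) {A B : Matrix (Fin n) (Fin n) ℝ}
    (h : spectralRadius ℂ (mapC A) ≤ spectralRadius ℂ (mapC B)) :
    specRad A ≤ specRad B := by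
  haveI : Nonempty (Fin n) := ⟨⟨0, hn⟩⟩
  rw [specRad_def A]
  refine Real.sSup_le ?_ (nonneg_specRad hn B)
  rintro x ⟨μ, hμ, rfl⟩
  have h1 : (‖μ‖₊ : ℝ≥0∞) ≤ spectralRadius ℂ (mapC A) := by
    rw [spectralRadius]
    exact le_iSup₂ (f := fun k (_ : k ∈ spectrum ℂ (mapC A)) => (‖k‖₊ : ℝ≥0∞)) μ hμ
  have h2 : spectralRadius ℂ (mapC B) ≤ ENNReal.ofReal (specRad B) := by
    rw [spectralRadius]
    refine iSup₂_le fun k hk => ?_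
    rw [← enorm_eq_nnnorm, ← ofReal_norm]
    exact ENNReal.ofReal_le_ofReal (by
      exact abs_le_specRad hn hk)
  have h3 : (‖μ‖₊ : ℝ≥0∞) ≤ ENNReal.ofReal (specRad B) := le_trans h1 (le_trans h h2)
  rw [← enorm_eq_nnnorm, ← ofReal_norm] at h3
  rw [ENNReal.ofReal_le_ofReal_iff (nonneg_specRad hn B)] at h3
  exact h3

lemma specRad_neg (A : Matrix (Fin n) (Fin n) ℝ) : specRad (-A) = specRad A := by
  rw [specRad_def, specRad_def]
  congr 1
  have hneg : mapC (-A) = -(mapC A) := by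
    ext i j; simp [mapC, Matrix.map_apply]
  ext x
  constructor
  · rintro ⟨μ, hμ, rfl⟩
    rw [hneg, ← spectrum.neg_eq, Set.mem_neg] at hμ
    exact ⟨-μ, hμ, (norm_neg μ).symm⟩
  · rintro ⟨μ, hμ, rfl⟩
    refine ⟨-μ, ?_, (norm_neg μ).symm⟩
    rw [hneg, ← spectrum.neg_eq, Set.mem_neg, neg_neg]
    exact hμ

lemma isUnit_det_of_hurwitz (V : Matrix (Fin n) (Fin n) ℝ) (hH : IsHurwitz V) :
    IsUnit V.det := by
  rw [isUnit_iff_ne_zero]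
  intro h0
  have hdetC : (mapC V).det = 0 := by
    rw [mapC_eq, ← RingHom.map_det, h0, map_zero]
  have hnu : ¬ IsUnit (mapC V) := by
    rw [Matrix.isUnit_iff_isUnit_det, hdetC]
    simp
  have h0m : (0 : ℂ) ∈ spectrum ℂ (mapC V) := (spectrum.zero_mem_iff (R := ℂ)).mpr hnu
  have := hH 0 h0m
  simp at this

lemma exists_shift (V : Matrix (Fin n) (Fin n) ℝ) (hH : IsHurwitz V) :
    ∃ s : ℝ, 0 < s ∧ (∀ i, 0 ≤ V i i + s) ∧
      (∀ μ ∈ spectrum ℂ (mapC V), ‖μ + s‖ < s) := by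
  have hfin := Matrix.finite_spectrum (mapC V)
  classical
  set t1 : ℝ≥0 := Finset.univ.sup (fun i : Fin n => ‖V i i‖₊) with ht1
  set t2 : ℝ≥0 := hfin.toFinset.sup
    (fun μ : ℂ => ((‖μ‖) ^ 2 / (2 * (-μ.re))).toNNReal) with ht2
  refine ⟨1 + t1 + t2, by positivity, ?_, ?_⟩
  · intro i
    have h1 : ‖V i i‖₊ ≤ t1 := by
      rw [ht1]; exact Finset.le_sup (f := fun i : Fin n => ‖V i i‖₊) (Finset.mem_univ i)
    have h2 : -V i i ≤ (t1 : ℝ) := by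
      calc -V i i ≤ |V i i| := neg_le_abs _
        _ = ‖V i i‖ := (Real.norm_eq_abs _).symm
        _ ≤ (t1 : ℝ) := by exact_mod_cast h1
    have h3 : (0:ℝ) ≤ t2 := t2.coe_nonneg
    linarith
  · intro μ hμ
    have hre : μ.re < 0 := hH μ hμ
    set s : ℝ := 1 + t1 + t2 with hs
    have hs0 : (0:ℝ) < s := by positivity
    have habs2 : (‖μ + s‖) ^ 2 = (‖μ‖) ^ 2 + 2 * s * μ.re + s ^ 2 := by
      rw [Complex.sq_norm, Complex.sq_norm, Complex.normSq_apply, Complex.normSq_apply]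
      simp only [Complex.add_re, Complex.add_im, Complex.ofReal_re, Complex.ofReal_im]
      ring
    have hq : (‖μ‖) ^ 2 / (2 * (-μ.re)) < s := by
      have hmem : μ ∈ hfin.toFinset := hfin.mem_toFinset.mpr hμ
      have h1 : ((‖μ‖) ^ 2 / (2 * (-μ.re))).toNNReal ≤ t2 := by
        rw [ht2]
        exact Finset.le_sup
          (f := fun μ : ℂ => ((‖μ‖) ^ 2 / (2 * (-μ.re))).toNNReal) hmem
      have hval : (0:ℝ) ≤ (‖μ‖) ^ 2 / (2 * (-μ.re)) := by
        apply div_nonneg (by positivity); linarith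
      have h2 : (‖μ‖) ^ 2 / (2 * (-μ.re)) ≤ (t2 : ℝ) := by
        rw [← Real.coe_toNNReal _ hval]
        exact_mod_cast h1
      have h3 : (0:ℝ) ≤ t1 := t1.coe_nonneg
      linarith
    have h2 : (‖μ‖) ^ 2 < 2 * (-μ.re) * s := by
      rw [div_lt_iff₀ (by linarith)] at hq
      linarith [hq]
    have hlt : (‖μ + s‖) ^ 2 < s ^ 2 := by
      rw [habs2]; nlinarith
    exact lt_of_pow_lt_pow_left₀ 2 hs0.le hlt

/-- The entry-evaluation continuous linear map. -/
noncomputable def entryCLM (i j : Fin n) : Matrix (Fin n) (Fin n) ℂ →L[ℂ] ℂ :=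
  LinearMap.mkContinuous
    { toFun := fun A => A i j
      map_add' := fun _ _ => rfl
      map_smul' := fun _ _ => rfl }
    1
    (fun A => by
      rw [one_mul]
      have h1 : ‖A i j‖₊ ≤ ∑ k, ‖A i k‖₊ :=
        Finset.single_le_sum (f := fun k => ‖A i k‖₊) (fun _ _ => zero_le) (Finset.mem_univ j)
      have h2 : (∑ k, ‖A i k‖₊) ≤ ‖A‖₊ := by
        rw [Matrix.linfty_opNNNorm_def]
        exact Finset.le_sup (f := fun i : Fin n => ∑ k, ‖A i k‖₊) (Finset.mem_univ i)
      exact_mod_cast h1.trans h2)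

/-- The key M-matrix fact: the inverse of a Metzler Hurwitz matrix is entrywise nonpositive,
equivalently `(-V)⁻¹` is entrywise nonnegative (proved via the Neumann series). -/
lemma neg_inv_entry_nonneg (hn : 0 < n) (V : Matrix (Fin n) (Fin n) ℝ)
    (hM : IsMetzler V) (hH : IsHurwitz V) : ∀ i j, 0 ≤ (-V)⁻¹ i j := by
  haveI : Nonempty (Fin n) := ⟨⟨0, hn⟩⟩
  have hdet : IsUnit V.det := isUnit_det_of_hurwitz V hH
  have hdetneg : IsUnit (-V).det := by
    rw [Matrix.det_neg]
    exact ((isUnit_one.neg).pow _).mul hdet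
  obtain ⟨s, hs0, hdiag, hspec⟩ := exists_shift V hH
  have hsC : (s : ℂ) ≠ 0 := by exact_mod_cast hs0.ne'
  set N : Matrix (Fin n) (Fin n) ℝ := V + s • (1 : Matrix (Fin n) (Fin n) ℝ) with hNdef
  have hNent : ∀ i j, 0 ≤ N i j := by
    intro i j
    by_cases hij : i = j
    · subst hij
      simpa [hNdef, Matrix.add_apply, Matrix.smul_apply, Matrix.one_apply_eq] using hdiag i
    · simpa [hNdef, Matrix.add_apply, Matrix.smul_apply, Matrix.one_apply_ne hij]
        using hM i j hij
  set M := mapC N with hMdef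
  have hMalg : M = mapC V + algebraMap ℂ (Matrix (Fin n) (Fin n) ℂ) (s : ℂ) := by
    ext i j
    simp only [hMdef, mapC, Matrix.map_apply, hNdef, Matrix.add_apply, Matrix.smul_apply,
      Matrix.one_apply, Matrix.algebraMap_matrix_apply, smul_eq_mul, Algebra.algebraMap_self,
      RingHom.id_apply]
    split_ifs <;> push_cast <;> ring
  have hMspec : spectrum ℂ M = spectrum ℂ (mapC V) + ({(s:ℂ)} : Set ℂ) := by
    rw [hMalg]
    exact (spectrum.add_singleton_eq _ _).symm
  set y : Matrix (Fin n) (Fin n) ℂ := (s:ℂ)⁻¹ • M with hy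
  have hyspec : ∀ k ∈ spectrum ℂ y, ‖k‖₊ < 1 := by
    intro k hk
    have hu : spectrum ℂ y = (Units.mk0 ((s:ℂ)⁻¹) (inv_ne_zero hsC)) • spectrum ℂ M := by
      rw [hy, ← spectrum.unit_smul_eq_smul]
      rfl
    rw [hu, Set.mem_smul_set] at hk
    obtain ⟨ν, hν, rfl⟩ := hk
    rw [hMspec, Set.add_singleton] at hν
    obtain ⟨μ, hμ, rfl⟩ := hν
    have habs := hspec μ hμ
    have hnorm : ‖(Units.mk0 ((s:ℂ)⁻¹) (inv_ne_zero hsC)) • (μ + (s:ℂ))‖ < 1 := by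
      rw [Units.smul_def, norm_smul, Units.val_mk0, norm_inv]
      have h1 : ‖(s:ℂ)‖ = s := by
        rw [Complex.norm_real, Real.norm_eq_abs, abs_of_pos hs0]
      have h2 : ‖μ + (s:ℂ)‖ < s := by exact habs
      rw [h1]
      calc s⁻¹ * ‖μ + (s:ℂ)‖ < s⁻¹ * s :=
            mul_lt_mul_of_pos_left h2 (inv_pos.mpr hs0)
        _ = 1 := inv_mul_cancel₀ hs0.ne'
    exact_mod_cast hnorm
  have hrad : spectralRadius ℂ y < 1 := by
    have hne := spectrum.nonempty y
    have := spectrum.spectralRadius_lt_of_forall_lt_of_nonempty hne (r := 1) hyspec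
    simpa using this
  obtain ⟨r, hr1, hr2⟩ := ENNReal.lt_iff_exists_nnreal_btwn.mp hrad
  have hr2' : r < 1 := by exact_mod_cast hr2
  have hgel := spectrum.pow_nnnorm_pow_one_div_tendsto_nhds_spectralRadius y
  have hev0 : ∀ᶠ (m : ℕ) in Filter.atTop, (‖y ^ m‖₊ : ℝ≥0∞) ^ (1/(m:ℝ)) < (r : ℝ≥0∞) :=
    hgel.eventually_lt_const hr1
  have hev : ∀ᶠ m in Filter.atTop, ‖y ^ m‖₊ ≤ r ^ m := by
    filter_upwards [hev0, Filter.eventually_ge_atTop 1] with m hm hm1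
    have hm0 : ((m:ℕ):ℝ) ≠ 0 := Nat.cast_ne_zero.mpr (by omega)
    have h1 := ENNReal.rpow_lt_rpow hm (show (0:ℝ) < (m:ℝ) by positivity)
    rw [← ENNReal.rpow_mul, one_div, inv_mul_cancel₀ hm0, ENNReal.rpow_one] at h1
    rw [ENNReal.rpow_natCast, ← ENNReal.coe_pow] at h1
    exact_mod_cast h1.le
  have hevR : ∀ᶠ m in Filter.atTop, ‖y ^ m‖ ≤ (r:ℝ) ^ m := by
    filter_upwards [hev] with m hm
    have h1 := NNReal.coe_le_coe.mpr hm
    simpa [NNReal.coe_pow] using h1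
  have hsum : Summable (fun m => y ^ m) :=
    Summable.of_norm_bounded_eventually_nat (g := fun m => (r:ℝ)^m)
      (summable_geometric_of_lt_one r.coe_nonneg (by exact_mod_cast hr2')) hevR
  have hy0 : Filter.Tendsto (fun m => y ^ m) Filter.atTop (nhds 0) := by
    apply squeeze_zero_norm' hevR
    exact tendsto_pow_atTop_nhds_zero_of_lt_one r.coe_nonneg (by exact_mod_cast hr2')
  set T := ∑' m, y ^ m with hT
  have hHasSum := hsum.hasSum
  have hmulT : (1 - y) * T = 1 := by
    have h2 : HasSum (fun m => (1 - y) * y ^ m) ((1 - y) * T) := hHasSum.mul_left _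
    have h3 : HasSum (fun m => y ^ m - y ^ (m+1)) ((1 - y) * T) := by
      have heq : (fun m => y ^ m - y ^ (m+1)) = fun m => (1 - y) * y ^ m := by
        funext m; rw [sub_mul, one_mul, pow_succ']
      rw [heq]
      exact h2
    have h4 := h3.tendsto_sum_nat
    have h5 : Filter.Tendsto (fun N => ∑ m ∈ Finset.range N, (y ^ m - y ^ (m+1)))
        Filter.atTop (nhds (1 : Matrix (Fin n) (Fin n) ℂ)) := by
      have heq : ∀ N, ∑ m ∈ Finset.range N, (y ^ m - y ^ (m+1)) = 1 - y ^ N := by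
        intro N; rw [Finset.sum_range_sub' (fun m => y ^ m)]; simp
      simp only [heq]
      simpa using (tendsto_const_nhds.sub hy0)
    exact tendsto_nhds_unique h4 h5
  have hsV : mapC (-V) = (s:ℂ) • (1 - y) := by
    have h1 : (s:ℂ) • y = M := by
      rw [hy, smul_smul, mul_inv_cancel₀ hsC, one_smul]
    rw [smul_sub, h1]
    ext i j
    by_cases hij : i = j
    · subst hij
      simp only [mapC, Matrix.map_apply, hMdef, hNdef, Matrix.sub_apply, Matrix.add_apply,
        Matrix.smul_apply, Matrix.one_apply_eq, Matrix.neg_apply, smul_eq_mul]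
      push_cast
      ring
    · simp only [mapC, Matrix.map_apply, hMdef, hNdef, Matrix.sub_apply, Matrix.add_apply,
        Matrix.smul_apply, Matrix.one_apply_ne hij, Matrix.neg_apply, smul_eq_mul]
      push_cast
      ring
  have hVinv1 : mapC (-V) * mapC ((-V)⁻¹) = 1 := by
    rw [← mapC_mul, Matrix.mul_nonsing_inv _ hdetneg, mapC_one]
  have hVinv2 : mapC (-V) * ((s:ℂ)⁻¹ • T) = 1 := by
    rw [hsV, smul_mul_smul_comm, mul_inv_cancel₀ hsC, one_smul, hmulT]
  have hEq : mapC ((-V)⁻¹) = (s:ℂ)⁻¹ • T := by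
    have h1 : mapC ((-V)⁻¹) * mapC (-V) = 1 := mul_eq_one_comm.mp hVinv1
    calc mapC ((-V)⁻¹) = mapC ((-V)⁻¹) * (mapC (-V) * ((s:ℂ)⁻¹ • T)) := by
          rw [hVinv2, mul_one]
      _ = (mapC ((-V)⁻¹) * mapC (-V)) * ((s:ℂ)⁻¹ • T) := by rw [mul_assoc]
      _ = (s:ℂ)⁻¹ • T := by rw [h1, one_mul]
  intro i j
  have hTentry : T i j = ∑' m, (y ^ m) i j := by
    rw [hT]
    exact (entryCLM i j).map_tsum hsum
  have hterm : ∀ m, (y ^ m) i j = Complex.ofReal ((s⁻¹) ^ m * (N ^ m) i j) := by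
    intro m
    rw [hy, hMdef, smul_pow, ← mapC_pow]
    simp only [Matrix.smul_apply, mapC, Matrix.map_apply, smul_eq_mul]
    push_cast
    ring
  have hsummable : Summable (fun m => (y ^ m) i j) :=
    hsum.map ((entryCLM i j).toLinearMap.toAddMonoidHom) (entryCLM i j).continuous
  have hre : 0 ≤ (T i j).re := by
    have hTre : (T i j).re = ∑' m, ((y ^ m) i j).re := by
      rw [hTentry]
      exact Complex.reCLM.map_tsum hsummable
    rw [hTre]
    apply tsum_nonneg
    intro m
    rw [hterm m, Complex.ofReal_re]
    exact mul_nonneg (pow_nonneg (inv_nonneg.mpr hs0.le) m) (pow_entry_nonneg hNent m i j)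
  have hentry : Complex.ofReal ((-V)⁻¹ i j) = (s:ℂ)⁻¹ * T i j := by
    have h1 := congrFun (congrFun hEq i) j
    simpa [mapC, Matrix.map_apply, Matrix.smul_apply, smul_eq_mul] using h1
  have hre2 : (-V)⁻¹ i j = s⁻¹ * (T i j).re := by
    have h1 := congrArg Complex.re hentry
    rw [Complex.ofReal_re] at h1
    rw [h1, show ((s:ℂ)⁻¹) = ((s⁻¹ : ℝ) : ℂ) by push_cast; ring, Complex.re_ofReal_mul]
  rw [hre2]
  exact mul_nonneg (inv_nonneg.mpr hs0.le) hre

lemma inv_entry_nonpos (hn : 0 < n) (V : Matrix (Fin n) (Fin n) ℝ)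
    (hM : IsMetzler V) (hH : IsHurwitz V) : ∀ i j, V⁻¹ i j ≤ 0 := by
  have hdet : IsUnit V.det := isUnit_det_of_hurwitz V hH
  have hdetneg : IsUnit (-V).det := by
    rw [Matrix.det_neg]
    exact ((isUnit_one.neg).pow _).mul hdet
  have h1 := neg_inv_entry_nonneg hn V hM hH
  have hVinv : V⁻¹ = -((-V)⁻¹) := by
    apply Matrix.inv_eq_right_inv
    rw [mul_neg, ← neg_mul]
    exact Matrix.mul_nonsing_inv _ hdetneg
  intro i j
  rw [hVinv]
  simpa [Matrix.neg_apply] using h1 i j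

end R0Aux

/-- Monotonicity of the basic reproduction number in the resource vector `θ`. -/
theorem basic_reproduction_number_antitone {k n : ℕ} (hk : 0 < k) (hn : 0 < n)
    (F Vod Vd : (Fin k → ℝ) → Matrix (Fin n) (Fin n) ℝ)
    (hFnonneg : ∀ θ i j, 0 ≤ F θ i j)
    (hFanti : ∀ θ θ' : Fin k → ℝ, (∀ i, θ i ≤ θ' i) → ∀ i j, F θ' i j ≤ F θ i j)
    (hVodnonneg : ∀ θ i j, 0 ≤ Vod θ i j)
    (hVodanti : ∀ θ θ' : Fin k → ℝ, (∀ i, θ i ≤ θ' i) → ∀ i j, Vod θ' i j ≤ Vod θ i j)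
    (hVddiag : ∀ θ i j, i ≠ j → Vd θ i j = 0)
    (hVdnonneg : ∀ θ i j, 0 ≤ Vd θ i j)
    (hVdmono : ∀ θ θ' : Fin k → ℝ, (∀ i, θ i ≤ θ' i) → ∀ i j, Vd θ i j ≤ Vd θ' i j)
    (θ θ' : Fin k → ℝ) (hθ : ∀ i, θ i ≤ θ' i)
    (hVmetzler : IsMetzler (Vod θ - Vd θ)) (hVhurwitz : IsHurwitz (Vod θ - Vd θ))
    (hV'metzler : IsMetzler (Vod θ' - Vd θ')) (hV'hurwitz : IsHurwitz (Vod θ' - Vd θ')) :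
    specRad (F θ' * (Vod θ' - Vd θ')⁻¹) ≤ specRad (F θ * (Vod θ - Vd θ)⁻¹) := by
  classical
  set V : Matrix (Fin n) (Fin n) ℝ := Vod θ - Vd θ with hVdef
  set V' : Matrix (Fin n) (Fin n) ℝ := Vod θ' - Vd θ' with hV'def
  have hWent := R0Aux.inv_entry_nonpos hn V hVmetzler hVhurwitz
  have hW'ent := R0Aux.inv_entry_nonpos hn V' hV'metzler hV'hurwitz
  set W : Matrix (Fin n) (Fin n) ℝ := -(V⁻¹) with hWdef
  set W' : Matrix (Fin n) (Fin n) ℝ := -(V'⁻¹) with hW'def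
  have hWpos : ∀ i j, 0 ≤ W i j := fun i j => by
    simpa [hWdef, Matrix.neg_apply] using hWent i j
  have hW'pos : ∀ i j, 0 ≤ W' i j := fun i j => by
    simpa [hW'def, Matrix.neg_apply] using hW'ent i j
  have hdet : IsUnit V.det := R0Aux.isUnit_det_of_hurwitz V hVhurwitz
  have hdet' : IsUnit V'.det := R0Aux.isUnit_det_of_hurwitz V' hV'hurwitz
  have hVle : ∀ i j, V' i j ≤ V i j := by
    intro i j
    have h1 := hVodanti θ θ' hθ i j
    have h2 := hVdmono θ θ' hθ i j
    simp only [hVdef, hV'def, Matrix.sub_apply]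
    linarith
  have hdiff : W - W' = W' * (V - V') * W := by
    have e1 : V * V⁻¹ = 1 := Matrix.mul_nonsing_inv _ hdet
    have e2 : V'⁻¹ * V' = 1 := Matrix.nonsing_inv_mul _ hdet'
    rw [hWdef, hW'def]
    calc -V⁻¹ - -V'⁻¹ = V'⁻¹ - V⁻¹ := by abel
      _ = V'⁻¹ * (V * V⁻¹) - (V'⁻¹ * V') * V⁻¹ := by rw [e1, e2, mul_one, one_mul]
      _ = V'⁻¹ * (V - V') * V⁻¹ := by noncomm_ring
      _ = -V'⁻¹ * (V - V') * -V⁻¹ := by noncomm_ring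
  have hVVpos : ∀ i j, 0 ≤ (V - V') i j := by
    intro i j
    simp only [Matrix.sub_apply]
    linarith [hVle i j]
  have hWle : ∀ i j, W' i j ≤ W i j := by
    intro i j
    have h0 : 0 ≤ (W' * (V - V') * W) i j :=
      R0Aux.mul_entry_nonneg (R0Aux.mul_entry_nonneg hW'pos hVVpos) hWpos i j
    have h1 := congrFun (congrFun hdiff i) j
    simp only [Matrix.sub_apply] at h1
    linarith [h0, h1.ge, h1.le]
  have hF'pos : ∀ i j, 0 ≤ F θ' i j := hFnonneg θ'
  have hFle : ∀ i j, F θ' i j ≤ F θ i j := hFanti θ θ' hθ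
  have hP'pos : ∀ i j, 0 ≤ (F θ' * W') i j := R0Aux.mul_entry_nonneg hF'pos hW'pos
  have hPle : ∀ i j, (F θ' * W') i j ≤ (F θ * W) i j :=
    R0Aux.mul_entry_le hF'pos hFle hW'pos hWle
  have hmono := R0Aux.spectralRadius_mono hP'pos hPle
  have hfinal := R0Aux.specRad_le_specRad hn hmono
  have hrw' : F θ' * V'⁻¹ = -(F θ' * W') := by
    rw [hW'def, mul_neg, neg_neg]
  have hrw : F θ * V⁻¹ = -(F θ * W) := by
    rw [hWdef, mul_neg, neg_neg]
  calc specRad (F θ' * V'⁻¹) = specRad (F θ' * W') := by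
        rw [hrw', R0Aux.specRad_neg]
    _ ≤ specRad (F θ * W) := hfinal
    _ = specRad (F θ * V⁻¹) := by rw [hrw, R0Aux.specRad_neg]
end

section
/- Let F, F', V, V' be n×n real matrices with 0 ≤ F' ≤ F entrywise, let V and V' be Metzler and Hurwitz with V' ≤ V entrywise. Then ρ(F' (V')⁻¹) ≤ ρ(F V⁻¹). -/
open Matrix

open Filter Topology
open scoped ENNReal NNReal

attribute [local instance] Matrix.linftyOpNormedRing Matrix.linftyOpNormedAlgebra
  Matrix.linftyOpNormedAddCommGroup

namespace SpecRadAux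

variable {n : ℕ}

lemma mapC_pow (A : Matrix (Fin n) (Fin n) ℝ) (k : ℕ) :
    (A ^ k).map Complex.ofReal = (A.map Complex.ofReal) ^ k := by
  exact
    (map_pow ((Complex.ofRealHom).mapMatrix) A k)

lemma mapC_neg (A : Matrix (Fin n) (Fin n) ℝ) :
    (-A).map Complex.ofReal = -(A.map Complex.ofReal) := by
  ext i j; simp [Matrix.map_apply]

lemma nnnorm_mapC (A : Matrix (Fin n) (Fin n) ℝ) :
    ‖A.map Complex.ofReal‖₊ = ‖A‖₊ := by
  simp only [Matrix.linfty_opNNNorm_def, Matrix.map_apply, Complex.nnnorm_real]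

lemma entry_nnnorm_le (A : Matrix (Fin n) (Fin n) ℝ) (i j : Fin n) :
    ‖A i j‖₊ ≤ ‖A‖₊ := by
  rw [Matrix.linfty_opNNNorm_def]
  exact le_trans (Finset.single_le_sum (f := fun j => ‖A i j‖₊) (fun _ _ => zero_le)
    (Finset.mem_univ j)) (Finset.le_sup (f := fun i => ∑ j : Fin n, ‖A i j‖₊) (Finset.mem_univ i))

lemma nnnorm_le_nnnorm {A B : Matrix (Fin n) (Fin n) ℝ}
    (hA : ∀ i j, 0 ≤ A i j) (hAB : ∀ i j, A i j ≤ B i j) : ‖A‖₊ ≤ ‖B‖₊ := by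
  simp only [Matrix.linfty_opNNNorm_def]
  apply Finset.sup_mono_fun
  intro i _
  apply Finset.sum_le_sum
  intro j _
  rw [← NNReal.coe_le_coe]
  simpa [Real.norm_eq_abs, abs_of_nonneg (hA i j),
    abs_of_nonneg ((hA i j).trans (hAB i j))] using hAB i j

lemma specRad_eq_toReal [NeZero n] (A : Matrix (Fin n) (Fin n) ℝ) :
    specRad A = (spectralRadius ℂ (A.map Complex.ofReal)).toReal := by
  obtain ⟨k, hk, hkeq⟩ := spectrum.exists_nnnorm_eq_spectralRadius_of_nonempty
    (spectrum.nonempty (A.map Complex.ofReal))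
  have hub : ∀ x ∈ {x : ℝ | ∃ μ ∈ spectrum ℂ (A.map Complex.ofReal), x = ‖μ‖},
      x ≤ ‖k‖ := by
    rintro x ⟨μ, hμ, rfl⟩
    have h1 : (‖μ‖₊ : ℝ≥0∞) ≤ spectralRadius ℂ (A.map Complex.ofReal) :=
      le_iSup₂ (f := fun k (_ : k ∈ spectrum ℂ (A.map Complex.ofReal)) => (‖k‖₊ : ℝ≥0∞)) μ hμ
    rw [← hkeq, ENNReal.coe_le_coe] at h1
    exact NNReal.coe_le_coe.mpr h1
  have hgt : IsGreatest {x : ℝ | ∃ μ ∈ spectrum ℂ (A.map Complex.ofReal), x = ‖μ‖}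
      (‖k‖) := ⟨⟨k, hk, rfl⟩, hub⟩
  rw [specRad, hgt.csSup_eq, ← hkeq]
  simp [coe_nnnorm]

lemma specRad_neg (A : Matrix (Fin n) (Fin n) ℝ) : specRad (-A) = specRad A := by
  unfold specRad
  congr 1
  ext x
  constructor
  · rintro ⟨μ, hμ, rfl⟩
    rw [mapC_neg, ← spectrum.neg_eq] at hμ
    rw [Set.mem_neg] at hμ
    exact ⟨-μ, hμ, by simp⟩
  · rintro ⟨μ, hμ, rfl⟩
    refine ⟨-μ, ?_, by simp⟩
    rw [mapC_neg, ← spectrum.neg_eq, Set.mem_neg, neg_neg]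
    exact hμ

lemma pow_entry_mono {A B : Matrix (Fin n) (Fin n) ℝ}
    (hA : ∀ i j, 0 ≤ A i j) (hAB : ∀ i j, A i j ≤ B i j) (k : ℕ) :
    ∀ i j, 0 ≤ (A ^ k) i j ∧ (A ^ k) i j ≤ (B ^ k) i j := by
  induction k with
  | zero => intro i j; by_cases h : i = j <;> simp [pow_zero, Matrix.one_apply, h]
  | succ k ih =>
    intro i j
    rw [pow_succ, pow_succ, Matrix.mul_apply, Matrix.mul_apply]
    constructor
    · exact Finset.sum_nonneg fun l _ => mul_nonneg (ih i l).1 (hA l j)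
    · refine Finset.sum_le_sum fun l _ => ?_
      exact mul_le_mul (ih i l).2 (hAB l j) (hA l j) (((ih i l).1.trans (ih i l).2))

lemma spectralRadius_mono [NeZero n] {A B : Matrix (Fin n) (Fin n) ℝ}
    (hA : ∀ i j, 0 ≤ A i j) (hAB : ∀ i j, A i j ≤ B i j) :
    spectralRadius ℂ (A.map Complex.ofReal) ≤ spectralRadius ℂ (B.map Complex.ofReal) := by
  have hnorm : ∀ k : ℕ, ‖(A.map Complex.ofReal) ^ k‖₊ ≤ ‖(B.map Complex.ofReal) ^ k‖₊ := by
    intro k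
    rw [← mapC_pow, ← mapC_pow, nnnorm_mapC, nnnorm_mapC]
    exact nnnorm_le_nnnorm (fun i j => (pow_entry_mono hA hAB k i j).1)
      (fun i j => (pow_entry_mono hA hAB k i j).2)
  refine ge_of_tendsto
    (spectrum.pow_nnnorm_pow_one_div_tendsto_nhds_spectralRadius (B.map Complex.ofReal))
    (eventually_atTop.2 ⟨1, fun k' hk' => ?_⟩)
  obtain ⟨k, rfl⟩ : ∃ k, k' = k + 1 := ⟨k' - 1, by omega⟩
  have : ((k : ℝ) + 1) = ((k + 1 : ℕ) : ℝ) := by push_cast; ring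
  rw [← this]
  calc spectralRadius ℂ (A.map Complex.ofReal)
      ≤ (‖(A.map Complex.ofReal) ^ (k + 1)‖₊ : ℝ≥0∞) ^ (1 / (k + 1) : ℝ) *
        (‖(1 : Matrix (Fin n) (Fin n) ℂ)‖₊ : ℝ≥0∞) ^ (1 / (k + 1) : ℝ) :=
      spectrum.spectralRadius_le_pow_nnnorm_pow_one_div ℂ _ k
    _ = (‖(A.map Complex.ofReal) ^ (k + 1)‖₊ : ℝ≥0∞) ^ (1 / (k + 1) : ℝ) := by
        rw [nnnorm_one]; simp
    _ ≤ (‖(B.map Complex.ofReal) ^ (k + 1)‖₊ : ℝ≥0∞) ^ (1 / (k + 1) : ℝ) := by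
        gcongr
        exact_mod_cast hnorm (k + 1)

lemma specRad_mono [NeZero n] {A B : Matrix (Fin n) (Fin n) ℝ}
    (hA : ∀ i j, 0 ≤ A i j) (hAB : ∀ i j, A i j ≤ B i j) :
    specRad A ≤ specRad B := by
  rw [specRad_eq_toReal, specRad_eq_toReal]
  exact ENNReal.toReal_mono
    ((spectrum.spectralRadius_le_nnnorm _).trans_lt ENNReal.coe_lt_top).ne
    (spectralRadius_mono hA hAB)


lemma pow_tendsto_zero [NeZero n] {A : Matrix (Fin n) (Fin n) ℝ}
    (h : spectralRadius ℂ (A.map Complex.ofReal) < 1) :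
    Tendsto (fun k : ℕ => A ^ k) atTop (𝓝 0) := by
  obtain ⟨r, hr1, hr2⟩ := ENNReal.lt_iff_exists_nnreal_btwn.mp h
  have hr2' : (r : ℝ) < 1 := by exact_mod_cast hr2
  have hev := (spectrum.pow_nnnorm_pow_one_div_tendsto_nhds_spectralRadius
    (A.map Complex.ofReal)).eventually_lt_const hr1
  apply squeeze_zero_norm' (a := fun k : ℕ => (r : ℝ) ^ k)
  · filter_upwards [hev, eventually_ge_atTop 1] with k hk hk1
    have hkpos : (0 : ℝ) < (k : ℝ) := by exact_mod_cast hk1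
    have h2 : (‖(A.map Complex.ofReal) ^ k‖₊ : ℝ≥0∞) < (r : ℝ≥0∞) ^ (k : ℝ) := by
      have := ENNReal.rpow_lt_rpow hk hkpos
      rwa [← ENNReal.rpow_mul, one_div, inv_mul_cancel₀ hkpos.ne',
        ENNReal.rpow_one] at this
    rw [← mapC_pow, nnnorm_mapC, ENNReal.rpow_natCast, ← ENNReal.coe_pow,
      ENNReal.coe_lt_coe] at h2
    calc ‖A ^ k‖ = ((‖A ^ k‖₊ : ℝ≥0) : ℝ) := rfl
      _ ≤ ((r ^ k : ℝ≥0) : ℝ) := by exact_mod_cast h2.le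
      _ = (r : ℝ) ^ k := by push_cast; ring
  · exact tendsto_pow_atTop_nhds_zero_of_lt_one r.coe_nonneg hr2'

lemma hurwitz_isUnit_det {V : Matrix (Fin n) (Fin n) ℝ}
    (h : ∀ μ ∈ spectrum ℂ (V.map Complex.ofReal), μ.re < 0) : IsUnit V.det := by
  have h0 : (0 : ℂ) ∉ spectrum ℂ (V.map Complex.ofReal) := fun h0 => by
    simpa using h 0 h0
  rw [spectrum.zero_mem_iff, not_not, Matrix.isUnit_iff_isUnit_det] at h0
  have hdet : (V.map Complex.ofReal).det = (V.det : ℂ) := by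
    simpa only [RingHom.mapMatrix_apply] using (RingHom.map_det Complex.ofRealHom V).symm ▸ rfl
  rw [hdet, isUnit_iff_ne_zero] at h0
  exact isUnit_iff_ne_zero.mpr (by exact_mod_cast h0)


lemma entry_tendsto {f : ℕ → Matrix (Fin n) (Fin n) ℝ} {L : Matrix (Fin n) (Fin n) ℝ}
    (h : Tendsto f atTop (𝓝 L)) (i j : Fin n) :
    Tendsto (fun N => f N i j) atTop (𝓝 (L i j)) := by
  replace h := tendsto_iff_norm_sub_tendsto_zero.mp h
  rw [tendsto_iff_norm_sub_tendsto_zero]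
  apply squeeze_zero (fun N => norm_nonneg _) _ h
  intro N
  have : f N i j - L i j = (f N - L) i j := by simp [Matrix.sub_apply]
  rw [this, ← coe_nnnorm, ← coe_nnnorm]
  exact_mod_cast entry_nnnorm_le (f N - L) i j

lemma neumann_tendsto {A : Matrix (Fin n) (Fin n) ℝ}
    (hu : IsUnit (1 - A).det)
    (hpow : Tendsto (fun N : ℕ => A ^ N) atTop (𝓝 0)) :
    Tendsto (fun N : ℕ => ∑ k ∈ Finset.range N, A ^ k) atTop (𝓝 (1 - A)⁻¹) := by
  have key : ∀ N : ℕ, ∑ k ∈ Finset.range N, A ^ k = (1 - A ^ N) * (1 - A)⁻¹ := by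
    intro N
    have h1 : (∑ k ∈ Finset.range N, A ^ k) * (1 - A) = 1 - A ^ N := by
      have := geom_sum_mul A N
      calc (∑ k ∈ Finset.range N, A ^ k) * (1 - A)
          = -((∑ k ∈ Finset.range N, A ^ k) * (A - 1)) := by
            rw [← neg_sub A 1, mul_neg]
        _ = -(A ^ N - 1) := by rw [this]
        _ = 1 - A ^ N := neg_sub _ _
    calc ∑ k ∈ Finset.range N, A ^ k
        = (∑ k ∈ Finset.range N, A ^ k) * ((1 - A) * (1 - A)⁻¹) := by
          rw [Matrix.mul_nonsing_inv _ hu, mul_one]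
      _ = ((∑ k ∈ Finset.range N, A ^ k) * (1 - A)) * (1 - A)⁻¹ := by rw [mul_assoc]
      _ = (1 - A ^ N) * (1 - A)⁻¹ := by rw [h1]
  simp only [key]
  have : Tendsto (fun N : ℕ => (1 - A ^ N : Matrix (Fin n) (Fin n) ℝ)) atTop (𝓝 1) := by
    simpa using (tendsto_const_nhds (x := (1 : Matrix (Fin n) (Fin n) ℝ))).sub hpow
  simpa using this.mul tendsto_const_nhds


lemma aux_one [NeZero n] {V : Matrix (Fin n) (Fin n) ℝ} {s : ℝ} (hs0 : 0 < s)
    (hVm : IsMetzler V) (hVh : IsHurwitz V)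
    (hdiag : ∀ i, -V i i ≤ s)
    (heig : ∀ μ ∈ spectrum ℂ (V.map Complex.ofReal),
      ‖μ‖ ^ 2 / (-2 * μ.re) < s) :
    (∀ i j, 0 ≤ (s⁻¹ • (s • 1 + V)) i j) ∧
    spectralRadius ℂ ((s⁻¹ • (s • 1 + V)).map Complex.ofReal) < 1 ∧
    (1 : Matrix (Fin n) (Fin n) ℝ) - s⁻¹ • (s • 1 + V) = s⁻¹ • (-V) := by
  have hsinv : (0:ℝ) < s⁻¹ := inv_pos.mpr hs0
  refine ⟨?_, ?_, ?_⟩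
  · intro i j
    by_cases h : i = j
    · subst h
      have : -V i i ≤ s := hdiag i
      simp only [Matrix.smul_apply, Matrix.add_apply, Matrix.one_apply_eq, smul_eq_mul, mul_one]
      nlinarith
    · simp only [Matrix.smul_apply, Matrix.add_apply, Matrix.one_apply_ne h, smul_eq_mul,
        mul_zero, zero_add]
      exact mul_nonneg hsinv.le (hVm i j h)
  · -- spectral radius bound
    have hmap : (s⁻¹ • (s • 1 + V)).map Complex.ofReal =
        ((s⁻¹ : ℝ) : ℂ) • (((s : ℝ) : ℂ) • 1 + V.map Complex.ofReal) := by
      ext i j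
      by_cases h : i = j <;>
        simp [Matrix.map_apply, Matrix.smul_apply, Matrix.add_apply, Matrix.one_apply, h,
          smul_eq_mul] <;> push_cast <;> ring
    have hunit : (((s⁻¹ : ℝ) : ℂ)) ≠ 0 := by
      exact_mod_cast inv_ne_zero hs0.ne'
    have hmem : ∀ μ ∈ spectrum ℂ ((s⁻¹ • (s • 1 + V)).map Complex.ofReal),
        ∃ w ∈ spectrum ℂ (V.map Complex.ofReal), μ = ((s⁻¹ : ℝ) : ℂ) * (((s : ℝ) : ℂ) + w) := by
      intro μ hμ
      rw [hmap] at hμ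
      set u : ℂˣ := Units.mk0 _ hunit with hu
      have h1 : (((s⁻¹ : ℝ) : ℂ)) • (((s : ℝ) : ℂ) • 1 + V.map Complex.ofReal) =
          u • (((s : ℝ) : ℂ) • 1 + V.map Complex.ofReal) := rfl
      rw [h1, spectrum.unit_smul_eq_smul] at hμ
      obtain ⟨ν, hν, rfl⟩ := hμ
      have h2 : (((s : ℝ) : ℂ)) • (1 : Matrix (Fin n) (Fin n) ℂ) =
          algebraMap ℂ (Matrix (Fin n) (Fin n) ℂ) ((s : ℝ) : ℂ) :=
        (Algebra.algebraMap_eq_smul_one _).symm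
      rw [h2, ← spectrum.singleton_add_eq, Set.singleton_add] at hν
      obtain ⟨w, hw, rfl⟩ := hν
      exact ⟨w, hw, rfl⟩
    have habs : ∀ w ∈ spectrum ℂ (V.map Complex.ofReal),
        ‖((s : ℝ) : ℂ) + w‖ < s := by
      intro w hw
      have hre : w.re < 0 := hVh w hw
      have h1 : ‖w‖ ^ 2 / (-2 * w.re) < s := heig w hw
      have h2 : ‖w‖ ^ 2 < s * (-2 * w.re) := by
        rw [div_lt_iff₀ (by linarith)] at h1; linarith [h1]
      have h3 : ‖w‖ ^ 2 = w.re ^ 2 + w.im ^ 2 := by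
        rw [Complex.sq_norm, Complex.normSq_apply]; ring
      have h4 : (‖((s : ℝ) : ℂ) + w‖) ^ 2 =
          (s + w.re) ^ 2 + w.im ^ 2 := by
        rw [Complex.sq_norm, Complex.normSq_apply]
        simp [Complex.add_re, Complex.add_im]
        ring
      nlinarith [norm_nonneg (((s : ℝ) : ℂ) + w), hs0]
    have hnn : ∀ μ ∈ spectrum ℂ ((s⁻¹ • (s • 1 + V)).map Complex.ofReal), ‖μ‖₊ < 1 := by
      intro μ hμ
      obtain ⟨w, hw, rfl⟩ := hmem μ hμ
      have : ‖((s⁻¹ : ℝ) : ℂ) * (((s : ℝ) : ℂ) + w)‖ < 1 := by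
        rw [norm_mul, Complex.norm_real, Real.norm_eq_abs, abs_of_pos hsinv]
        calc s⁻¹ * ‖((s : ℝ) : ℂ) + w‖ < s⁻¹ * s :=
          (mul_lt_mul_iff_right₀ hsinv).mpr (habs w hw)
        _ = 1 := inv_mul_cancel₀ hs0.ne'
      rw [← NNReal.coe_lt_coe]
      simpa using this
    have := spectrum.spectralRadius_lt_of_forall_lt_of_nonempty
      (spectrum.nonempty ((s⁻¹ • (s • 1 + V)).map Complex.ofReal)) (r := 1) hnn
    simpa using this
  · -- algebraic identity
    rw [smul_add, smul_smul, inv_mul_cancel₀ hs0.ne', one_smul, smul_neg]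
    abel


lemma inv_neg_eq [NeZero n] {V : Matrix (Fin n) (Fin n) ℝ} {s : ℝ} (hs0 : 0 < s)
    (h4 : (1 : Matrix (Fin n) (Fin n) ℝ) - s⁻¹ • (s • 1 + V) = s⁻¹ • (-V))
    (hu : IsUnit ((1 : Matrix (Fin n) (Fin n) ℝ) - s⁻¹ • (s • 1 + V)).det) :
    (-V)⁻¹ = s⁻¹ • ((1 : Matrix (Fin n) (Fin n) ℝ) - s⁻¹ • (s • 1 + V))⁻¹ := by
  apply Matrix.inv_eq_right_inv
  have hV : (-V) = s • ((1 : Matrix (Fin n) (Fin n) ℝ) - s⁻¹ • (s • 1 + V)) := by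
    rw [h4, smul_smul, mul_inv_cancel₀ hs0.ne', one_smul]
  rw [hV, Matrix.smul_mul, Matrix.mul_smul, smul_smul, mul_inv_cancel₀ hs0.ne',
    Matrix.mul_nonsing_inv _ hu, one_smul]

lemma det_one_sub_unit [NeZero n] {V : Matrix (Fin n) (Fin n) ℝ} {s : ℝ} (hs0 : 0 < s)
    (h4 : (1 : Matrix (Fin n) (Fin n) ℝ) - s⁻¹ • (s • 1 + V) = s⁻¹ • (-V))
    (hVh : ∀ μ ∈ spectrum ℂ (V.map Complex.ofReal), μ.re < 0) :
    IsUnit ((1 : Matrix (Fin n) (Fin n) ℝ) - s⁻¹ • (s • 1 + V)).det := by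
  rw [h4, Matrix.det_smul, Matrix.det_neg]
  have hdet := isUnit_iff_ne_zero.mp (hurwitz_isUnit_det hVh)
  exact isUnit_iff_ne_zero.mpr (mul_ne_zero (pow_ne_zero _ (inv_ne_zero hs0.ne'))
    (mul_ne_zero (pow_ne_zero _ (by norm_num)) hdet))

lemma negInv_main [NeZero n] {V V' : Matrix (Fin n) (Fin n) ℝ}
    (hVm : IsMetzler V) (hVh : IsHurwitz V) (hV'm : IsMetzler V') (hV'h : IsHurwitz V')
    (hle : ∀ i j, V' i j ≤ V i j) :
    (∀ i j, 0 ≤ (-V')⁻¹ i j) ∧ (∀ i j, (-V')⁻¹ i j ≤ (-V)⁻¹ i j) := by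
  classical
  -- choose s
  have hTfin := (Matrix.finite_spectrum (V.map Complex.ofReal)).union
    (Matrix.finite_spectrum (V'.map Complex.ofReal))
  obtain ⟨c1, hc1⟩ := (hTfin.image (fun μ => ‖μ‖ ^ 2 / (-2 * μ.re))).bddAbove
  obtain ⟨c2, hc2⟩ := (Set.finite_range (fun i : Fin n => max (-V i i) (-V' i i))).bddAbove
  set s : ℝ := max (max c1 c2) 0 + 1 with hs
  have hmax : max c1 c2 ≤ max (max c1 c2) 0 := le_max_left _ _
  have hs0 : 0 < s := by
    have : (0:ℝ) ≤ max (max c1 c2) 0 := le_max_right _ _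
    simp only [hs]; linarith
  have heigV : ∀ μ ∈ spectrum ℂ (V.map Complex.ofReal),
      ‖μ‖ ^ 2 / (-2 * μ.re) < s := by
    intro μ hμ
    have := hc1 (Set.mem_image_of_mem _ (Set.mem_union_left _ hμ))
    have h2 : c1 ≤ max c1 c2 := le_max_left _ _
    simp only [hs]; linarith
  have heigV' : ∀ μ ∈ spectrum ℂ (V'.map Complex.ofReal),
      ‖μ‖ ^ 2 / (-2 * μ.re) < s := by
    intro μ hμ
    have := hc1 (Set.mem_image_of_mem _ (Set.mem_union_right _ hμ))
    have h2 : c1 ≤ max c1 c2 := le_max_left _ _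
    simp only [hs]; linarith
  have hdiag : ∀ i, -V i i ≤ s ∧ -V' i i ≤ s := by
    intro i
    have := hc2 (Set.mem_range_self (f := fun i : Fin n => max (-V i i) (-V' i i)) i)
    have h2 : c2 ≤ max c1 c2 := le_max_right _ _
    constructor
    · have h3 : -V i i ≤ max (-V i i) (-V' i i) := le_max_left _ _
      simp only [hs]; linarith
    · have h3 : -V' i i ≤ max (-V i i) (-V' i i) := le_max_right _ _
      simp only [hs]; linarith
  obtain ⟨hA0, hρ, h4⟩ := aux_one hs0 hVm hVh (fun i => (hdiag i).1) heigV
  obtain ⟨hA'0, hρ', h4'⟩ := aux_one hs0 hV'm hV'h (fun i => (hdiag i).2) heigV'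
  set A : Matrix (Fin n) (Fin n) ℝ := s⁻¹ • (s • 1 + V) with hA
  set A' : Matrix (Fin n) (Fin n) ℝ := s⁻¹ • (s • 1 + V') with hA'
  have hA'leA : ∀ i j, A' i j ≤ A i j := by
    intro i j
    simp only [hA, hA', Matrix.smul_apply, Matrix.add_apply, smul_eq_mul]
    exact mul_le_mul_of_nonneg_left (add_le_add_right (hle i j) _) (inv_nonneg.mpr hs0.le)
  have hu : IsUnit ((1 : Matrix (Fin n) (Fin n) ℝ) - A).det := det_one_sub_unit hs0 h4 hVh
  have hu' : IsUnit ((1 : Matrix (Fin n) (Fin n) ℝ) - A').det := det_one_sub_unit hs0 h4' hV'h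
  have hE := neumann_tendsto hu (pow_tendsto_zero hρ)
  have hE' := neumann_tendsto hu' (pow_tendsto_zero hρ')
  -- entrywise facts about the limits
  have hEntry : ∀ N i j, (∑ k ∈ Finset.range N, A' ^ k) i j ≤ (∑ k ∈ Finset.range N, A ^ k) i j
      ∧ 0 ≤ (∑ k ∈ Finset.range N, A' ^ k) i j := by
    intro N i j
    rw [Matrix.sum_apply, Matrix.sum_apply]
    constructor
    · exact Finset.sum_le_sum fun k _ => (pow_entry_mono hA'0 hA'leA k i j).2
    · exact Finset.sum_nonneg fun k _ => (pow_entry_mono hA'0 hA'leA k i j).1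
  have hinv0 : ∀ i j, 0 ≤ ((1 : Matrix (Fin n) (Fin n) ℝ) - A')⁻¹ i j := by
    intro i j
    exact ge_of_tendsto (entry_tendsto hE' i j)
      (Eventually.of_forall fun N => (hEntry N i j).2)
  have hinvle : ∀ i j, ((1 : Matrix (Fin n) (Fin n) ℝ) - A')⁻¹ i j ≤
      ((1 : Matrix (Fin n) (Fin n) ℝ) - A)⁻¹ i j :=
    fun i j => le_of_tendsto_of_tendsto' (entry_tendsto hE' i j) (entry_tendsto hE i j)
      (fun N => (hEntry N i j).1)
  have hVinv := inv_neg_eq hs0 h4 hu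
  have hV'inv := inv_neg_eq hs0 h4' hu'
  constructor
  · intro i j
    rw [hV'inv]
    simp only [Matrix.smul_apply, smul_eq_mul]
    exact mul_nonneg (inv_nonneg.mpr hs0.le) (hinv0 i j)
  · intro i j
    rw [hVinv, hV'inv]
    simp only [Matrix.smul_apply, smul_eq_mul]
    exact mul_le_mul_of_nonneg_left (hinvle i j) (inv_nonneg.mpr hs0.le)


lemma spectrum_dim0 (M : Matrix (Fin 0) (Fin 0) ℂ) : spectrum ℂ M = ∅ := by
  haveI : Subsingleton (Matrix (Fin 0) (Fin 0) ℂ) := ⟨fun a b => by ext i j; exact i.elim0⟩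
  ext μ
  simp only [Set.mem_empty_iff_false, iff_false]
  exact fun h => (spectrum.mem_iff.mp h) (isUnit_of_subsingleton _)

lemma specRad_dim0 (A : Matrix (Fin 0) (Fin 0) ℝ) : specRad A = 0 := by
  rw [specRad]
  convert Real.sSup_empty using 2
  rw [Set.eq_empty_iff_forall_notMem]
  rintro x ⟨μ, hμ, rfl⟩
  rw [spectrum_dim0] at hμ
  exact hμ

lemma neg_inv_of_isUnit {M : Matrix (Fin n) (Fin n) ℝ} (h : IsUnit M.det) :
    (-M)⁻¹ = -(M⁻¹) :=
  Matrix.inv_eq_right_inv (by rw [neg_mul_neg, Matrix.mul_nonsing_inv _ h])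

end SpecRadAux

open SpecRadAux

/-- If `0 ≤ F' ≤ F` entrywise and `V' ≤ V` are Metzler and Hurwitz, then
`ρ(F' (V')⁻¹) ≤ ρ(F V⁻¹)`. -/
theorem specRad_mul_inv_mono {n : ℕ} (F F' V V' : Matrix (Fin n) (Fin n) ℝ)
    (hF'nonneg : ∀ i j, 0 ≤ F' i j) (hF'le : ∀ i j, F' i j ≤ F i j)
    (hVmetzler : IsMetzler V) (hVhurwitz : IsHurwitz V)
    (hV'metzler : IsMetzler V') (hV'hurwitz : IsHurwitz V')
    (hVle : ∀ i j, V' i j ≤ V i j) :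
    specRad (F' * V'⁻¹) ≤ specRad (F * V⁻¹) := by
  rcases Nat.eq_zero_or_pos n with hn | hn
  · subst hn
    rw [specRad_dim0, specRad_dim0]
  haveI : NeZero n := ⟨hn.ne'⟩
  obtain ⟨hneg0, hnegle⟩ := negInv_main hVmetzler hVhurwitz hV'metzler hV'hurwitz hVle
  have hdetV : IsUnit V.det := hurwitz_isUnit_det hVhurwitz
  have hdetV' : IsUnit V'.det := hurwitz_isUnit_det hV'hurwitz
  have hFnonneg : ∀ i j, 0 ≤ F i j := fun i j => (hF'nonneg i j).trans (hF'le i j)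
  have hnegV0 : ∀ i j, 0 ≤ (-V)⁻¹ i j := fun i j => (hneg0 i j).trans (hnegle i j)
  -- rewrite using negated inverses
  have e1 : F' * V'⁻¹ = -(F' * (-V')⁻¹) := by
    rw [neg_inv_of_isUnit hdetV', mul_neg, neg_neg]
  have e2 : F * V⁻¹ = -(F * (-V)⁻¹) := by
    rw [neg_inv_of_isUnit hdetV, mul_neg, neg_neg]
  rw [e1, e2, specRad_neg, specRad_neg]
  -- entrywise comparison of the products
  apply specRad_mono
  · intro i j
    rw [Matrix.mul_apply]
    exact Finset.sum_nonneg fun l _ => mul_nonneg (hF'nonneg i l) (hneg0 l j)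
  · intro i j
    rw [Matrix.mul_apply, Matrix.mul_apply]
    refine Finset.sum_le_sum fun l _ => ?_
    exact mul_le_mul (hF'le i l) (hnegle l j) (hneg0 l j) (hFnonneg i l)
end
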